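/- arXiv:2010.01561 — 4 statements merged into one kernel-verified Lean document; each statement's English description precedes it below -/
import Mathlib

section
/- Let 1 < p < ∞ and 0 < λ < p − 1, and set K = (λ/(p−1))^{1/p}. Suppose r : [0,π_p] → ℝ is continuous and the boundary value problem (|u′|^{p−2}u′)′ + (λ + r(x))|u|^{p−2}u = 0 on (0,π_p), u(0) = u(π_p) = 0, has a nontrivial solution. Then ∫₀^{π_p} r_+(x) dx > 2·K^{p−1}·(cot_p(K·π_p/2))^{p−1}. -/
/-- `arcsin_p x = ∫₀ˣ (1 - tᵖ)^(-1/p) dt`. -/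
noncomputable def arcsinP (p x : ℝ) : ℝ := ∫ t in (0:ℝ)..x, (1 - t ^ p) ^ (-(1 / p))

/-- The generalized π: `π_p = 2 arcsin_p 1`. -/
noncomputable def piP (p : ℝ) : ℝ := 2 * arcsinP p 1

/-- `sin_p` on `[0, π_p/2]`, defined as the inverse of `arcsin_p : [0,1] → [0, π_p/2]`. -/
noncomputable def sinPHalf (p : ℝ) : ℝ → ℝ := Function.invFunOn (arcsinP p) (Set.Icc 0 1)

/-- `sin_p` on `[0, π_p]`, extended by `sin_p x = sin_p (π_p - x)`. -/
noncomputable def sinP (p x : ℝ) : ℝ :=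
  if x ≤ piP p / 2 then sinPHalf p x else sinPHalf p (piP p - x)

/-- `cos_p x = (1 - sin_p x ^ p)^(1/p)` on `[0, π_p/2]`, with minus sign on `[π_p/2, π_p]`. -/
noncomputable def cosP (p x : ℝ) : ℝ :=
  if x ≤ piP p / 2 then (1 - sinP p x ^ p) ^ (1 / p)
  else -((1 - sinP p x ^ p) ^ (1 / p))

/-- `cot_p x = cos_p x / sin_p x`. -/
noncomputable def cotP (p x : ℝ) : ℝ := cosP p x / sinP p x

/-- `u` (with continuous derivative `u'` on `[0, π_p]`) is a nontrivial solution of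
`(|u'|^(p-2) u')' + (λ + r x) |u|^(p-2) u = 0` on `(0, π_p)` with `u 0 = u π_p = 0`. -/
def IsNontrivialSolution (p lam : ℝ) (r u u' : ℝ → ℝ) : Prop :=
  (∃ x ∈ Set.Icc (0:ℝ) (piP p), u x ≠ 0) ∧
  ContinuousOn u' (Set.Icc 0 (piP p)) ∧
  (∀ x ∈ Set.Icc (0:ℝ) (piP p), HasDerivWithinAt u (u' x) (Set.Icc 0 (piP p)) x) ∧
  u 0 = 0 ∧ u (piP p) = 0 ∧
  ∀ x ∈ Set.Ioo (0:ℝ) (piP p),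
    HasDerivAt (fun y => |u' y| ^ (p - 2) * u' y)
      (-((lam + r x) * |u x| ^ (p - 2) * u x)) x



open MeasureTheory intervalIntegral Set Filter Topology

section trig
variable {p : ℝ} (hp : 1 < p)
include hp

lemma hp0 : (0:ℝ) < p := lt_trans one_pos hp

lemma base_pos {t : ℝ} (ht : t ∈ Ico (0:ℝ) 1) : 0 < 1 - t ^ p := by
  have : t ^ p < 1 := Real.rpow_lt_one ht.1 ht.2 (hp0 hp)
  linarith

lemma integrand_pos {t : ℝ} (ht : t ∈ Ico (0:ℝ) 1) : 0 < (1 - t ^ p) ^ (-(1 / p)) :=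
  Real.rpow_pos_of_pos (base_pos hp ht) _

lemma integrand_le {t : ℝ} (ht : t ∈ Ico (0:ℝ) 1) :
    (1 - t ^ p) ^ (-(1 / p)) ≤ (1 - t) ^ (-(1 / p)) := by
  have h1 : t ^ p ≤ t := by
    rcases eq_or_lt_of_le ht.1 with h | h
    · simp [← h, Real.zero_rpow (ne_of_gt (hp0 hp))]
    · calc t ^ p ≤ t ^ (1:ℝ) :=
        Real.rpow_le_rpow_of_exponent_ge h (le_of_lt ht.2) (le_of_lt hp)
      _ = t := Real.rpow_one t
  have h2 : 0 < 1 - t := by linarith [ht.2]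
  exact Real.rpow_le_rpow_of_nonpos h2 (by linarith) (neg_nonpos.mpr (by positivity))

lemma integrand_meas : Measurable fun t : ℝ => (1 - t ^ p) ^ (-(1 / p)) := by
  measurability

lemma integrand_nonneg (t : ℝ) (ht : t ∈ Icc (0:ℝ) 1) : 0 ≤ (1 - t ^ p) ^ (-(1 / p)) := by
  apply Real.rpow_nonneg
  have : t ^ p ≤ 1 := Real.rpow_le_one ht.1 ht.2 (le_of_lt (hp0 hp))
  linarith

lemma intervalIntegrable_arcsinP :
    IntervalIntegrable (fun t : ℝ => (1 - t ^ p) ^ (-(1 / p))) volume 0 1 := by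
  have hr : (-1 : ℝ) < -(1 / p) := by
    have := hp0 hp
    have h1 : 1 / p < 1 := by rw [div_lt_one this]; exact hp
    linarith
  have h1 : IntervalIntegrable (fun x : ℝ => x ^ (-(1 / p))) volume 0 1 :=
    intervalIntegral.intervalIntegrable_rpow' hr
  have h2 : IntervalIntegrable (fun x : ℝ => (1 - x) ^ (-(1 / p))) volume 0 1 := by
    have := h1.comp_sub_left 1
    simpa using this.symm
  rw [intervalIntegrable_iff_integrableOn_Ioc_of_le (by norm_num)] at h2 ⊢
  apply h2.mono' ((integrand_meas hp).aestronglyMeasurable.restrict)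
  rw [ae_restrict_iff' measurableSet_Ioc]
  filter_upwards with t ht
  rw [Real.norm_eq_abs, abs_of_nonneg (integrand_nonneg hp t ⟨le_of_lt ht.1, ht.2⟩)]
  rcases eq_or_lt_of_le ht.2 with h | h
  · rw [h]
    norm_num [Real.one_rpow]
  · exact integrand_le hp ⟨le_of_lt ht.1, h⟩

lemma intervalIntegrable_arcsinP' {a b : ℝ} (ha : a ∈ Icc (0:ℝ) 1) (hb : b ∈ Icc (0:ℝ) 1) :
    IntervalIntegrable (fun t : ℝ => (1 - t ^ p) ^ (-(1 / p))) volume a b := by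
  apply (intervalIntegrable_arcsinP hp).mono_set
  rw [uIcc_of_le (by norm_num : (0:ℝ) ≤ 1)]
  exact uIcc_subset_Icc ha hb

omit hp in
lemma arcsinP_zero : arcsinP p 0 = 0 := intervalIntegral.integral_same

lemma arcsinP_sub {a b : ℝ} (ha : a ∈ Icc (0:ℝ) 1) (hb : b ∈ Icc (0:ℝ) 1) :
    arcsinP p b - arcsinP p a = ∫ t in a..b, (1 - t ^ p) ^ (-(1 / p)) := by
  have h0a : IntervalIntegrable (fun t : ℝ => (1 - t ^ p) ^ (-(1 / p))) volume 0 a :=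
    intervalIntegrable_arcsinP' hp ⟨le_refl 0, zero_le_one⟩ ha
  have hab : IntervalIntegrable (fun t : ℝ => (1 - t ^ p) ^ (-(1 / p))) volume a b :=
    intervalIntegrable_arcsinP' hp ha hb
  have := intervalIntegral.integral_add_adjacent_intervals h0a hab
  unfold arcsinP
  linarith [this]

lemma arcsinP_strictMono {a b : ℝ} (ha : a ∈ Icc (0:ℝ) 1) (hb : b ∈ Icc (0:ℝ) 1)
    (hab : a < b) : arcsinP p a < arcsinP p b := by
  have h : 0 < ∫ t in a..b, (1 - t ^ p) ^ (-(1 / p)) := by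
    apply intervalIntegral.intervalIntegral_pos_of_pos_on
      (intervalIntegrable_arcsinP' hp ha hb)
    · intro x hx
      exact integrand_pos hp ⟨le_trans ha.1 (le_of_lt hx.1), lt_of_lt_of_le hx.2 hb.2⟩
    · exact hab
  have := arcsinP_sub hp ha hb
  linarith

lemma arcsinP_pos {a : ℝ} (ha : a ∈ Ioc (0:ℝ) 1) : 0 < arcsinP p a := by
  have := arcsinP_strictMono hp ⟨le_refl 0, zero_le_one⟩ ⟨le_of_lt ha.1, ha.2⟩ ha.1
  rw [arcsinP_zero] at this; exact this

lemma piP_pos : 0 < piP p := by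
  have := arcsinP_pos hp ⟨zero_lt_one, le_refl 1⟩
  unfold piP; linarith

lemma arcsinP_continuousOn : ContinuousOn (arcsinP p) (Icc 0 1) := by
  have := intervalIntegral.continuousOn_primitive_interval
    (μ := volume) (a := (0:ℝ)) (b := 1)
    (f := fun t : ℝ => (1 - t ^ p) ^ (-(1 / p))) ?_
  · rw [uIcc_of_le (by norm_num : (0:ℝ) ≤ 1)] at this
    exact this
  · rw [uIcc_of_le (by norm_num : (0:ℝ) ≤ 1), ← intervalIntegrable_iff_integrableOn_Icc_of_le
      (by norm_num : (0:ℝ) ≤ 1)]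
    exact intervalIntegrable_arcsinP hp

lemma arcsinP_hasDerivAt {x : ℝ} (hx : x ∈ Ioo (0:ℝ) 1) :
    HasDerivAt (arcsinP p) ((1 - x ^ p) ^ (-(1 / p))) x := by
  apply intervalIntegral.integral_hasDerivAt_right
    (intervalIntegrable_arcsinP' hp ⟨le_refl 0, zero_le_one⟩ ⟨le_of_lt hx.1, le_of_lt hx.2⟩)
    ⟨univ, univ_mem, (integrand_meas hp).aestronglyMeasurable.restrict⟩
  have hb : 0 < 1 - x ^ p := base_pos hp ⟨le_of_lt hx.1, hx.2⟩
  have hcb : ContinuousAt (fun t : ℝ => 1 - t ^ p) x := by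
    have : ContinuousAt (fun t : ℝ => t ^ p) x :=
      Real.continuousAt_rpow_const x p (Or.inl (ne_of_gt hx.1))
    exact continuousAt_const.sub this
  exact hcb.rpow_const (Or.inl (ne_of_gt hb))

end trig


section stage2

/-- The Riccati nonlinearity `f s = λ + (p-1)|s|^{p/(p-1)}`. -/
noncomputable def fR (p lam : ℝ) (s : ℝ) : ℝ := lam + (p - 1) * |s| ^ (p / (p - 1))

/-- The substitution `σ t = K^{p-1} (1-t^p)^{(p-1)/p} t^{1-p}`. -/
noncomputable def sigmaS (p K t : ℝ) : ℝ :=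
  K ^ (p - 1) * (1 - t ^ p) ^ ((p - 1) / p) * t ^ (1 - p)

variable {p lam K : ℝ}

lemma fR_pos (hp1 : 0 < p - 1) (hlam0 : 0 < lam) (s : ℝ) : 0 < fR p lam s := by
  have : 0 ≤ (p - 1) * |s| ^ (p / (p - 1)) := by positivity
  unfold fR; linarith

lemma fR_cont (hp1 : 0 < p - 1) : Continuous (fR p lam) := by
  unfold fR
  apply continuous_const.add
  apply continuous_const.mul
  exact continuous_abs.rpow_const (fun x => Or.inr (le_of_lt (div_pos (by linarith) hp1)))

lemma hK_pow (hp : 1 < p) (hlam0 : 0 < lam) (hK : K = (lam / (p - 1)) ^ (1 / p)) :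
    K ^ p = lam / (p - 1) := by
  have hp1 : (0:ℝ) < p - 1 := by linarith
  have hx : (0:ℝ) < lam / (p - 1) := div_pos hlam0 hp1
  rw [hK, ← Real.rpow_mul (le_of_lt hx), one_div,
    inv_mul_cancel₀ (ne_of_gt (by linarith : (0:ℝ) < p)), Real.rpow_one]

lemma hK_mem (hp : 1 < p) (hlam0 : 0 < lam) (hlam1 : lam < p - 1)
    (hK : K = (lam / (p - 1)) ^ (1 / p)) : K ∈ Ioo (0:ℝ) 1 := by
  have hp1 : (0:ℝ) < p - 1 := by linarith
  have hx : (0:ℝ) < lam / (p - 1) := div_pos hlam0 hp1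
  constructor
  · rw [hK]; exact Real.rpow_pos_of_pos hx _
  · rw [hK]
    exact Real.rpow_lt_one (le_of_lt hx) ((div_lt_one hp1).mpr hlam1) (one_div_pos.mpr (by linarith))

lemma sigmaS_nonneg (hp : 1 < p) (hK0 : 0 < K) {t : ℝ} (ht : t ∈ Ioo (0:ℝ) 1) :
    0 ≤ sigmaS p K t := by
  have h1 : 0 < 1 - t ^ p := base_pos hp ⟨le_of_lt ht.1, ht.2⟩
  have := ht.1
  unfold sigmaS
  positivity

lemma sigmaS_pos (hp : 1 < p) (hK0 : 0 < K) {t : ℝ} (ht : t ∈ Ioo (0:ℝ) 1) :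
    0 < sigmaS p K t := by
  have h1 : 0 < 1 - t ^ p := base_pos hp ⟨le_of_lt ht.1, ht.2⟩
  have := ht.1
  unfold sigmaS
  positivity

lemma fR_sigmaS (hp : 1 < p) (hlam0 : 0 < lam) (hK : K = (lam / (p - 1)) ^ (1 / p))
    {t : ℝ} (ht : t ∈ Ioo (0:ℝ) 1) :
    fR p lam (sigmaS p K t) = (p - 1) * K ^ p * t ^ (-p) := by
  have hp1 : (0:ℝ) < p - 1 := by linarith
  have hK0 : (0:ℝ) < K := by
    rw [hK]; exact Real.rpow_pos_of_pos (div_pos hlam0 hp1) _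
  have ht0 := ht.1
  have hq : 0 < 1 - t ^ p := base_pos hp ⟨le_of_lt ht.1, ht.2⟩
  have habs : |sigmaS p K t| = sigmaS p K t := abs_of_nonneg (sigmaS_nonneg hp hK0 ht)
  have hmain : sigmaS p K t ^ (p / (p - 1)) = K ^ p * ((1 - t ^ p) * t ^ (-p)) := by
    unfold sigmaS
    rw [Real.mul_rpow (by positivity) (by positivity),
        Real.mul_rpow (by positivity) (by positivity),
        ← Real.rpow_mul (le_of_lt hK0), ← Real.rpow_mul (le_of_lt hq),
        ← Real.rpow_mul (le_of_lt ht0)]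
    rw [show (p - 1) * (p / (p - 1)) = p by field_simp,
        show (p - 1) / p * (p / (p - 1)) = 1 by field_simp,
        show (1 - p) * (p / (p - 1)) = -p by field_simp; ring]
    rw [Real.rpow_one]; ring
  have hl : lam = (p - 1) * K ^ p := by
    rw [hK_pow hp hlam0 hK]; field_simp
  have htp : (0:ℝ) < t ^ p := Real.rpow_pos_of_pos ht0 p
  unfold fR
  rw [habs, hmain, Real.rpow_neg (le_of_lt ht0)]
  nth_rewrite 1 [hl]
  field_simp
  ring

lemma sigmaS_hasDeriv (hp : 1 < p) (hlam0 : 0 < lam) (hK : K = (lam / (p - 1)) ^ (1 / p))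
    {t : ℝ} (ht : t ∈ Ioo (0:ℝ) 1) :
    HasDerivAt (sigmaS p K)
      (-(fR p lam (sigmaS p K t) * ((1 / K) * (1 - t ^ p) ^ (-(1 / p))))) t := by
  have hp1 : (0:ℝ) < p - 1 := by linarith
  have hK0 : (0:ℝ) < K := by rw [hK]; exact Real.rpow_pos_of_pos (div_pos hlam0 hp1) _
  have ht0 := ht.1
  have hq : 0 < 1 - t ^ p := base_pos hp ⟨le_of_lt ht.1, ht.2⟩
  have h1 : HasDerivAt (fun t : ℝ => t ^ p) (p * t ^ (p - 1)) t :=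
    Real.hasDerivAt_rpow_const (Or.inl (ne_of_gt ht0))
  have hq' : HasDerivAt (fun t : ℝ => 1 - t ^ p) (-(p * t ^ (p - 1))) t := h1.const_sub 1
  have h2 := hq'.rpow_const (p := (p - 1) / p) (Or.inl (ne_of_gt hq))
  have h3 : HasDerivAt (fun t : ℝ => t ^ (1 - p)) ((1 - p) * t ^ (1 - p - 1)) t :=
    Real.hasDerivAt_rpow_const (Or.inl (ne_of_gt ht0))
  have H := (h2.const_mul (K ^ (p - 1))).mul h3
  have H' : HasDerivAt (sigmaS p K)
      (K ^ (p - 1) * (-(p * t ^ (p - 1)) * ((p - 1) / p) * (1 - t ^ p) ^ ((p - 1) / p - 1)) *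
          t ^ (1 - p) +
        K ^ (p - 1) * (1 - t ^ p) ^ ((p - 1) / p) * ((1 - p) * t ^ (1 - p - 1))) t := H
  convert H' using 1
  rw [fR_sigmaS hp hlam0 hK ht]
  -- rewrite all rpow's into atoms
  rw [show (p - 1) / p - 1 = -(1 / p) by field_simp; ring,
      show (1:ℝ) - p - 1 = -p by ring,
      show (p - 1) / p = 1 + -(1 / p) by field_simp; ring]
  rw [Real.rpow_add hq, Real.rpow_one]
  have e1 : t ^ (p - 1) = t ^ p / t := by
    rw [Real.rpow_sub ht0, Real.rpow_one]
  have e2 : t ^ (1 - p) = t / t ^ p := by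
    rw [Real.rpow_sub ht0, Real.rpow_one]
  have e3 : t ^ (-p) = (t ^ p)⁻¹ := by
    rw [Real.rpow_neg (le_of_lt ht0)]
  have e4 : K ^ p = K ^ (p - 1) * K := by
    rw [Real.rpow_sub hK0, Real.rpow_one]
    field_simp
  rw [e1, e2, e3, e4]
  have htp : (0:ℝ) < t ^ p := Real.rpow_pos_of_pos ht0 p
  have hE : (0:ℝ) < (1 - t ^ p) ^ (-(1 / p)) := Real.rpow_pos_of_pos hq _
  field_simp
  ring

lemma sigmaS_tendsto (hp : 1 < p) (hK0 : 0 < K) :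
    Tendsto (sigmaS p K) (nhdsWithin 0 (Ioi (0:ℝ))) atTop := by
  have hp1 : (0:ℝ) < p - 1 := by linarith
  have hF : Tendsto (fun t : ℝ => K ^ (p - 1) * (1 - t ^ p) ^ ((p - 1) / p))
      (nhdsWithin 0 (Ioi (0:ℝ))) (nhds (K ^ (p - 1))) := by
    have hc1 : ContinuousAt (fun t : ℝ => t ^ p) 0 :=
      Real.continuousAt_rpow_const 0 p (Or.inr (by linarith))
    have hc2 : ContinuousAt (fun t : ℝ => (1 - t ^ p) ^ ((p - 1) / p)) 0 :=
      (continuousAt_const.sub hc1).rpow_const (Or.inr (by positivity))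
    have hc3 : ContinuousAt (fun t : ℝ => K ^ (p - 1) * (1 - t ^ p) ^ ((p - 1) / p)) 0 :=
      continuousAt_const.mul hc2
    have := hc3.tendsto
    have hval : K ^ (p - 1) * (1 - (0:ℝ) ^ p) ^ ((p - 1) / p) = K ^ (p - 1) := by
      rw [Real.zero_rpow (by positivity : p ≠ 0)]
      norm_num
    rw [hval] at this
    exact this.mono_left nhdsWithin_le_nhds
  have hG : Tendsto (fun t : ℝ => t ^ (1 - p)) (nhdsWithin 0 (Ioi (0:ℝ))) atTop := by
    have hinner : Tendsto (fun t : ℝ => t ^ (p - 1)) (nhdsWithin 0 (Ioi (0:ℝ)))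
        (nhdsWithin 0 (Ioi (0:ℝ))) := by
      rw [tendsto_nhdsWithin_iff]
      constructor
      · have hc : ContinuousAt (fun t : ℝ => t ^ (p - 1)) 0 :=
          Real.continuousAt_rpow_const 0 (p - 1) (Or.inr (by linarith))
        have := hc.tendsto
        rw [Real.zero_rpow (by positivity : p - 1 ≠ 0)] at this
        exact this.mono_left nhdsWithin_le_nhds
      · filter_upwards [self_mem_nhdsWithin] with t ht
        exact Real.rpow_pos_of_pos ht _
    have := tendsto_inv_nhdsGT_zero.comp hinner
    apply this.congr'
    filter_upwards [self_mem_nhdsWithin] with t ht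
    simp only [Function.comp]
    rw [show (1:ℝ) - p = -(p - 1) by ring, Real.rpow_neg (le_of_lt ht)]
  have := hF.pos_mul_atTop (Real.rpow_pos_of_pos hK0 _) hG
  exact this.congr (fun t => by unfold sigmaS; ring)

lemma integrableOn_inv_fR (hp : 1 < p) (hlam0 : 0 < lam) {c : ℝ} (hc : 0 < c) :
    MeasureTheory.IntegrableOn (fun s => (fR p lam s)⁻¹) (Ioi c) := by
  have hp1 : (0:ℝ) < p - 1 := by linarith
  have hpc : 1 < p / (p - 1) := by
    rw [lt_div_iff₀ hp1]; linarith
  have hbase : MeasureTheory.IntegrableOn (fun s : ℝ => s ^ (-(p / (p - 1)))) (Ioi c) :=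
    integrableOn_Ioi_rpow_of_lt (by linarith) hc
  have hg : MeasureTheory.IntegrableOn
      (fun s : ℝ => (p - 1)⁻¹ * s ^ (-(p / (p - 1)))) (Ioi c) := hbase.const_mul _
  apply hg.mono'
  · exact (((fR_cont hp1).measurable).inv).aestronglyMeasurable.restrict
  · rw [MeasureTheory.ae_restrict_iff' measurableSet_Ioi]
    filter_upwards with s hs
    have hs0 : 0 < s := lt_trans hc hs
    have hfpos : 0 < fR p lam s := fR_pos hp1 hlam0 s
    rw [Real.norm_eq_abs, abs_of_nonneg (inv_nonneg.mpr (le_of_lt hfpos))]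
    have h1 : (p - 1) * s ^ (p / (p - 1)) ≤ fR p lam s := by
      unfold fR
      rw [abs_of_nonneg (le_of_lt hs0)]
      linarith
    have h2 : 0 < (p - 1) * s ^ (p / (p - 1)) := by positivity
    calc (fR p lam s)⁻¹ ≤ ((p - 1) * s ^ (p / (p - 1)))⁻¹ := by
          exact inv_anti₀ h2 h1
      _ = (p - 1)⁻¹ * s ^ (-(p / (p - 1))) := by
          rw [mul_inv, Real.rpow_neg (le_of_lt hs0)]

end stage2

section stage2b
variable {p lam K : ℝ}

lemma sinPHalf_spec (hp : 1 < p) {y : ℝ} (hy : y ∈ Ioo 0 (piP p / 2)) :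
    sinPHalf p y ∈ Ioo (0:ℝ) 1 ∧ arcsinP p (sinPHalf p y) = y := by
  have h1 : arcsinP p 1 = piP p / 2 := by unfold piP; ring
  have hex : ∃ t ∈ Icc (0:ℝ) 1, arcsinP p t = y := by
    have hsub := intermediate_value_Icc zero_le_one (arcsinP_continuousOn hp)
    have hy' : y ∈ Icc (arcsinP p 0) (arcsinP p 1) := by
      rw [arcsinP_zero, h1]; exact ⟨le_of_lt hy.1, le_of_lt hy.2⟩
    obtain ⟨t, ht, h⟩ := hsub hy'
    exact ⟨t, ht, h⟩
  have hmem : sinPHalf p y ∈ Icc (0:ℝ) 1 := Function.invFunOn_mem hex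
  have heq : arcsinP p (sinPHalf p y) = y := Function.invFunOn_eq hex
  refine ⟨⟨?_, ?_⟩, heq⟩
  · rcases eq_or_lt_of_le hmem.1 with h0 | h0
    · exfalso
      rw [← h0, arcsinP_zero] at heq
      exact absurd heq.symm (ne_of_gt hy.1)
    · exact h0
  · rcases eq_or_lt_of_le hmem.2 with h0 | h0
    · exfalso
      rw [h0, h1] at heq
      exact absurd heq (ne_of_gt hy.2)
    · exact h0

lemma Kpi_mem (hp : 1 < p) (hlam0 : 0 < lam) (hlam1 : lam < p - 1)
    (hK : K = (lam / (p - 1)) ^ (1 / p)) :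
    K * piP p / 2 ∈ Ioo 0 (piP p / 2) := by
  obtain ⟨hK0, hK1⟩ := hK_mem hp hlam0 hlam1 hK
  have hpi := piP_pos hp
  constructor
  · positivity
  · rw [div_lt_div_iff₀ (by norm_num) (by norm_num)]
    nlinarith

/-- `t₀ = sin_p(K π_p/2)` facts -/
lemma t0_spec (hp : 1 < p) (hlam0 : 0 < lam) (hlam1 : lam < p - 1)
    (hK : K = (lam / (p - 1)) ^ (1 / p)) :
    sinPHalf p (K * piP p / 2) ∈ Ioo (0:ℝ) 1 ∧
      arcsinP p (sinPHalf p (K * piP p / 2)) = K * piP p / 2 :=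
  sinPHalf_spec hp (Kpi_mem hp hlam0 hlam1 hK)

lemma cotP_val (hp : 1 < p) (hlam0 : 0 < lam) (hlam1 : lam < p - 1)
    (hK : K = (lam / (p - 1)) ^ (1 / p)) :
    cotP p (K * piP p / 2) =
      (1 - (sinPHalf p (K * piP p / 2)) ^ p) ^ (1 / p) / (sinPHalf p (K * piP p / 2)) := by
  have hy := Kpi_mem hp hlam0 hlam1 hK
  have hle : K * piP p / 2 ≤ piP p / 2 := le_of_lt hy.2
  simp only [cotP, cosP, sinP, if_pos hle]

lemma cotP_pos (hp : 1 < p) (hlam0 : 0 < lam) (hlam1 : lam < p - 1)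
    (hK : K = (lam / (p - 1)) ^ (1 / p)) : 0 < cotP p (K * piP p / 2) := by
  obtain ⟨ht0, _⟩ := t0_spec hp hlam0 hlam1 hK
  rw [cotP_val hp hlam0 hlam1 hK]
  have hq : 0 < 1 - (sinPHalf p (K * piP p / 2)) ^ p := base_pos hp ⟨le_of_lt ht0.1, ht0.2⟩
  have := ht0.1
  positivity

lemma sigmaS_t0 (hp : 1 < p) (hlam0 : 0 < lam) (hlam1 : lam < p - 1)
    (hK : K = (lam / (p - 1)) ^ (1 / p)) :
    sigmaS p K (sinPHalf p (K * piP p / 2)) =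
      K ^ (p - 1) * (cotP p (K * piP p / 2)) ^ (p - 1) := by
  obtain ⟨ht0, _⟩ := t0_spec hp hlam0 hlam1 hK
  set t₀ := sinPHalf p (K * piP p / 2)
  have hq : 0 < 1 - t₀ ^ p := base_pos hp ⟨le_of_lt ht0.1, ht0.2⟩
  rw [cotP_val hp hlam0 hlam1 hK]
  rw [Real.div_rpow (by positivity) (le_of_lt ht0.1)]
  rw [← Real.rpow_mul (le_of_lt hq)]
  unfold sigmaS
  rw [show 1 / p * (p - 1) = (p - 1) / p by ring]
  have he : t₀ ^ (1 - p) = (t₀ ^ (p - 1))⁻¹ := by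
    rw [show (1:ℝ) - p = -(p - 1) by ring, Real.rpow_neg (le_of_lt ht0.1)]
  rw [he, div_eq_mul_inv]
  ring

lemma c_pos (hp : 1 < p) (hlam0 : 0 < lam) (hlam1 : lam < p - 1)
    (hK : K = (lam / (p - 1)) ^ (1 / p)) :
    0 < K ^ (p - 1) * (cotP p (K * piP p / 2)) ^ (p - 1) := by
  have hK0 := (hK_mem hp hlam0 hlam1 hK).1
  have hcot := cotP_pos hp hlam0 hlam1 hK
  positivity

/-- The key identity: `∫_{c}^{∞} ds/f(s) = π_p/2`. -/
lemma key_identity (hp : 1 < p) (hlam0 : 0 < lam) (hlam1 : lam < p - 1)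
    (hK : K = (lam / (p - 1)) ^ (1 / p)) :
    ∫ s in Ioi (K ^ (p - 1) * (cotP p (K * piP p / 2)) ^ (p - 1)),
      (fR p lam s)⁻¹ = piP p / 2 := by
  have hp1 : (0:ℝ) < p - 1 := by linarith
  obtain ⟨hK0, hK1⟩ := hK_mem hp hlam0 hlam1 hK
  obtain ⟨ht0, harc⟩ := t0_spec hp hlam0 hlam1 hK
  set t₀ := sinPHalf p (K * piP p / 2) with ht0def
  set c := K ^ (p - 1) * (cotP p (K * piP p / 2)) ^ (p - 1) with hcdef
  have hcσ : sigmaS p K t₀ = c := sigmaS_t0 hp hlam0 hlam1 hK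
  have hc0 : 0 < c := c_pos hp hlam0 hlam1 hK
  have hInt : MeasureTheory.IntegrableOn (fun s => (fR p lam s)⁻¹) (Ioi c) :=
    integrableOn_inv_fR hp hlam0 hc0
  have hfcont : Continuous fun s => (fR p lam s)⁻¹ :=
    (fR_cont hp1).inv₀ (fun x => ne_of_gt (fR_pos hp1 hlam0 x))
  set A : ℝ → ℝ := fun t => ∫ s in c..(sigmaS p K t), (fR p lam s)⁻¹ with hA
  set G : ℝ → ℝ := fun t => A t + (1 / K) * arcsinP p t with hG
  have hGderiv : ∀ t ∈ Ioo (0:ℝ) 1, HasDerivAt G 0 t := by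
    intro t ht
    have houter : HasDerivAt (fun y => ∫ s in c..y, (fR p lam s)⁻¹)
        ((fR p lam (sigmaS p K t))⁻¹) (sigmaS p K t) := by
      apply intervalIntegral.integral_hasDerivAt_right
        (hfcont.intervalIntegrable _ _)
        ⟨univ, univ_mem, hfcont.measurable.aestronglyMeasurable.restrict⟩
        hfcont.continuousAt
    have hσ := sigmaS_hasDeriv hp hlam0 hK ht
    have hAd : HasDerivAt A
        ((fR p lam (sigmaS p K t))⁻¹ *
          (-(fR p lam (sigmaS p K t) * ((1 / K) * (1 - t ^ p) ^ (-(1 / p)))))) t :=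
      HasDerivAt.comp t houter hσ
    have harc' : HasDerivAt (arcsinP p) ((1 - t ^ p) ^ (-(1 / p))) t :=
      arcsinP_hasDerivAt hp ht
    have := hAd.add (harc'.const_mul (1 / K))
    have hzero : (fR p lam (sigmaS p K t))⁻¹ *
          (-(fR p lam (sigmaS p K t) * ((1 / K) * (1 - t ^ p) ^ (-(1 / p))))) +
        1 / K * (1 - t ^ p) ^ (-(1 / p)) = 0 := by
      have hf0 : fR p lam (sigmaS p K t) ≠ 0 := ne_of_gt (fR_pos hp1 hlam0 _)
      field_simp <;> ring
    rw [hzero] at this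
    exact this
  have hconst : ∀ t ∈ Ioo (0:ℝ) 1, G t = G t₀ := by
    intro t ht
    rcases eq_or_ne t t₀ with h | h
    · rw [h]
    · have hlo : 0 < min t t₀ := lt_min ht.1 ht0.1
      have hhi : max t t₀ < 1 := max_lt ht.2 ht0.2
      have hab : min t t₀ < max t t₀ := min_lt_max.mpr h
      have hsub : Icc (min t t₀) (max t t₀) ⊆ Ioo (0:ℝ) 1 := fun x hx =>
        ⟨lt_of_lt_of_le hlo hx.1, lt_of_le_of_lt hx.2 hhi⟩
      have hcval := constant_of_derivWithin_zero
        (f := G) (a := min t t₀) (b := max t t₀)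
        (fun x hx => ((hGderiv x (hsub hx)).differentiableAt).differentiableWithinAt)
        (fun x hx => by
          have := (hGderiv x (hsub ⟨hx.1, le_of_lt hx.2⟩)).hasDerivWithinAt
            (s := Icc (min t t₀) (max t t₀))
          exact this.derivWithin (uniqueDiffOn_Icc hab x ⟨hx.1, le_of_lt hx.2⟩))
      have h1 := hcval t ⟨min_le_left _ _, le_max_left _ _⟩
      have h2 := hcval t₀ ⟨min_le_right _ _, le_max_right _ _⟩
      rw [h1, h2]
  have hGt0 : G t₀ = piP p / 2 := by
    have hA0 : A t₀ = 0 := by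
      rw [hA]; simp only; rw [hcσ]; exact intervalIntegral.integral_same
    rw [hG]; simp only; rw [hA0, harc]
    field_simp <;> ring
  -- limits along 𝓝[Ioo 0 1] 0
  set l : Filter ℝ := nhdsWithin 0 (Ioo (0:ℝ) 1) with hl
  have hlneBot : l.NeBot := by
    apply mem_closure_iff_nhdsWithin_neBot.mp
    rw [closure_Ioo (by norm_num : (0:ℝ) ≠ 1)]
    exact ⟨le_refl 0, by norm_num⟩
  have hσl : Tendsto (sigmaS p K) l atTop :=
    (sigmaS_tendsto hp hK0).mono_left (nhdsWithin_mono 0 Ioo_subset_Ioi_self)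
  have hAl : Tendsto A l (nhds (∫ s in Ioi c, (fR p lam s)⁻¹)) :=
    MeasureTheory.intervalIntegral_tendsto_integral_Ioi c hInt hσl
  have harcl : Tendsto (fun t => (1 / K) * arcsinP p t) l (nhds 0) := by
    have h1 : Tendsto (arcsinP p) l (nhds 0) := by
      have := (arcsinP_continuousOn hp 0 ⟨le_refl 0, zero_le_one⟩).tendsto
      rw [arcsinP_zero] at this
      exact this.mono_left (nhdsWithin_mono 0 Ioo_subset_Icc_self)
    have := h1.const_mul (1 / K)
    simpa using this
  have hGl : Tendsto G l (nhds (∫ s in Ioi c, (fR p lam s)⁻¹)) := by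
    rw [hG]
    have := hAl.add harcl
    rw [add_zero] at this
    exact this
  have hGconst : Tendsto G l (nhds (piP p / 2)) := by
    apply Tendsto.congr' _ tendsto_const_nhds
    filter_upwards [self_mem_nhdsWithin] with t ht
    rw [hconst t ht, hGt0]
  exact tendsto_nhds_unique hGl hGconst

end stage2b
section stage3
variable {p lam : ℝ}

/-- |Φ(v)| = |v|^(p-1) where Φ v = |v|^(p-2) v -/
lemma absPhi (hp : 1 < p) (v : ℝ) : |(|v| ^ (p - 2) * v)| = |v| ^ (p - 1) := by
  rcases eq_or_ne v 0 with h | h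
  · rw [h]
    simp [Real.zero_rpow (show p - 1 ≠ 0 by intro hh; nlinarith)]
  · have hv : 0 < |v| := abs_pos.mpr h
    rw [abs_mul, abs_of_nonneg (Real.rpow_nonneg (abs_nonneg v) _)]
    rw [show p - 1 = (p - 2) + 1 by ring, Real.rpow_add hv, Real.rpow_one]

lemma Phi_pos (hp : 1 < p) {v : ℝ} (hv : 0 < v) : 0 < |v| ^ (p - 2) * v := by
  have := abs_of_pos hv
  positivity

lemma Phi_neg (hp : 1 < p) {v : ℝ} (hv : v < 0) : |v| ^ (p - 2) * v < 0 := by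
  have h1 : 0 < |v| ^ (p - 2) := Real.rpow_pos_of_pos (abs_pos.mpr (ne_of_lt hv)) _
  exact mul_neg_of_pos_of_neg h1 hv

lemma Phi_zero : |(0:ℝ)| ^ (p - 2) * 0 = 0 := by ring

lemma Phi_ne_zero (hp : 1 < p) {v : ℝ} (hv : v ≠ 0) : |v| ^ (p - 2) * v ≠ 0 := by
  rcases lt_or_gt_of_ne hv with h | h
  · exact ne_of_lt (Phi_neg hp h)
  · exact ne_of_gt (Phi_pos hp h)

lemma Phi_cont (hp : 1 < p) : Continuous (fun v : ℝ => |v| ^ (p - 2) * v) := by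
  rw [continuous_iff_continuousAt]
  intro v
  rcases eq_or_ne v 0 with h | h
  · rw [h]
    have h0 : (fun v : ℝ => |v| ^ (p - 2) * v) 0 = 0 := by simp
    unfold ContinuousAt
    rw [h0]
    apply squeeze_zero_norm (fun t => le_of_eq (by rw [Real.norm_eq_abs, absPhi hp]))
    have hc : ContinuousAt (fun t : ℝ => |t| ^ (p - 1)) 0 := by
      apply ContinuousAt.rpow_const continuous_abs.continuousAt
      exact Or.inr (by linarith)
    have := hc.tendsto
    rw [abs_zero, Real.zero_rpow (show p - 1 ≠ 0 by intro hh; nlinarith)] at this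
    exact this
  · apply ContinuousAt.mul _ continuousAt_id
    exact ContinuousAt.rpow_const continuous_abs.continuousAt (Or.inl (abs_ne_zero.mpr h))

/-- derivative of Φ away from 0 -/
lemma Phi_hasDeriv (hp : 1 < p) {v : ℝ} (hv : v ≠ 0) :
    HasDerivAt (fun v : ℝ => |v| ^ (p - 2) * v) ((p - 1) * |v| ^ (p - 2)) v := by
  rcases lt_or_gt_of_ne hv with h | h
  · -- v < 0 : Φ = fun y => -((-y)^(p-1)) near v
    have hd : HasDerivAt (fun y : ℝ => -((-y) ^ (p - 1))) ((p - 1) * (-v) ^ (p - 2)) v := by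
      have h1 : HasDerivAt (fun y : ℝ => (-y)) (-1) v := (hasDerivAt_id v).neg
      have h2 : HasDerivAt (fun y : ℝ => y ^ (p - 1)) ((p - 1) * (-v) ^ (p - 1 - 1)) (-v) :=
        Real.hasDerivAt_rpow_const (Or.inl (by linarith))
      have h3 := (h2.comp v h1).neg
      have : -((p - 1) * (-v) ^ (p - 1 - 1) * -1) = (p - 1) * (-v) ^ (p - 2) := by
        rw [show p - 1 - 1 = p - 2 by ring]; ring
      rw [this] at h3
      exact h3
    rw [← abs_of_neg h] at hd
    apply hd.congr_of_eventuallyEq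
    have hmem : Iio (0:ℝ) ∈ nhds v := Iio_mem_nhds h
    filter_upwards [hmem] with y hy
    have hy' : y < 0 := hy
    rw [abs_of_neg hy', show p - 2 = p - 1 - 1 by ring]
    rw [Real.rpow_sub (by linarith : (0:ℝ) < -y), Real.rpow_one]
    rw [div_neg, neg_mul, div_mul_cancel₀ _ (ne_of_lt hy')]
  · have hd : HasDerivAt (fun y : ℝ => y ^ (p - 1)) ((p - 1) * v ^ (p - 1 - 1)) v :=
      Real.hasDerivAt_rpow_const (Or.inl (ne_of_gt h))
    have heq : (p - 1) * v ^ (p - 1 - 1) = (p - 1) * |v| ^ (p - 2) := by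
      rw [abs_of_pos h, show p - 1 - 1 = p - 2 by ring]
    rw [heq] at hd
    apply hd.congr_of_eventuallyEq
    have hmem : Ioi (0:ℝ) ∈ nhds v := Ioi_mem_nhds h
    filter_upwards [hmem] with y hy
    rw [abs_of_pos hy, show p - 1 = (p - 2) + 1 by ring, Real.rpow_add hy, Real.rpow_one]

/-- |v| = |Φ v|^(1/(p-1)) -/
lemma abs_eq_absPhi_rpow (hp : 1 < p) (v : ℝ) :
    |v| = |(|v| ^ (p - 2) * v)| ^ (1 / (p - 1)) := by
  rw [absPhi hp, ← Real.rpow_mul (abs_nonneg v),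
    mul_one_div, div_self (show p - 1 ≠ 0 by intro h; nlinarith), Real.rpow_one]

end stage3
section stage4
variable {p lam : ℝ} {r u u' : ℝ → ℝ}

lemma vanish_fwd (hp : 1 < p)
    (hr : ContinuousOn r (Icc 0 (piP p)))
    (hu' : ContinuousOn u' (Icc 0 (piP p)))
    (hucont : ContinuousOn u (Icc 0 (piP p)))
    (hderiv : ∀ x ∈ Icc (0:ℝ) (piP p), HasDerivWithinAt u (u' x) (Icc 0 (piP p)) x)
    (hODE : ∀ x ∈ Ioo (0:ℝ) (piP p),
      HasDerivAt (fun y => |u' y| ^ (p - 2) * u' y)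
        (-((lam + r x) * |u x| ^ (p - 2) * u x)) x)
    {a : ℝ} (ha : a ∈ Ico 0 (piP p)) (hua : u a = 0) (hu'a : u' a = 0) :
    ∃ h > 0, ∀ x ∈ Icc a (a + h), u x = 0 := by
  have hp1 : (0:ℝ) < p - 1 := by linarith
  have he0 : (0:ℝ) < 1 / (p - 1) := by positivity
  obtain ⟨C, hC⟩ := isCompact_Icc.exists_bound_of_continuousOn
    (continuousOn_const.add hr : ContinuousOn (fun x => lam + r x) (Icc 0 (piP p)))
  set C' := max C 1 with hC'def
  have hC'0 : (0:ℝ) < C' := lt_of_lt_of_le one_pos (le_max_right _ _)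
  have hC' : ∀ x ∈ Icc (0:ℝ) (piP p), |lam + r x| ≤ C' := fun x hx =>
    le_trans (hC x hx) (le_max_left _ _)
  -- choose h
  have hten : Tendsto (fun h : ℝ => h * (C' * h) ^ (1 / (p - 1))) (nhdsWithin 0 (Ioi 0))
      (nhds 0) := by
    have h1 : ContinuousAt (fun h : ℝ => h * (C' * h) ^ (1 / (p - 1))) 0 := by
      apply continuousAt_id.mul
      exact ((continuous_const.mul continuous_id).continuousAt).rpow_const (Or.inr (le_of_lt he0))
    have := h1.tendsto
    have hval : (0:ℝ) * (C' * 0) ^ (1 / (p - 1)) = 0 := by ring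
    rw [hval] at this
    exact this.mono_left nhdsWithin_le_nhds
  have hev1 : ∀ᶠ h in nhdsWithin (0:ℝ) (Ioi 0),
      h * (C' * h) ^ (1 / (p - 1)) < 1 := hten (Iio_mem_nhds one_pos)
  have hev2 : ∀ᶠ h in nhdsWithin (0:ℝ) (Ioi 0), h < piP p - a :=
    nhdsWithin_le_nhds (Iio_mem_nhds (by linarith [ha.2] : (0:ℝ) < piP p - a))
  have hev3 : ∀ᶠ h in nhdsWithin (0:ℝ) (Ioi 0), 0 < h := eventually_mem_nhdsWithin
  obtain ⟨h, hD1, hhπ, hh0⟩ := (hev1.and (hev2.and hev3)).exists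
  refine ⟨h, hh0, ?_⟩
  have hJsub : Icc a (a + h) ⊆ Icc 0 (piP p) := fun x hx =>
    ⟨le_trans ha.1 hx.1, by linarith [hx.2]⟩
  -- maximum of |u|
  obtain ⟨τ, hτJ, hτmax⟩ := isCompact_Icc.exists_isMaxOn
    (nonempty_Icc.mpr (by linarith : a ≤ a + h))
    ((hucont.mono hJsub).abs)
  set M := |u τ| with hMdef
  have hM0 : 0 ≤ M := abs_nonneg _
  have hMb : ∀ x ∈ Icc a (a + h), |u x| ≤ M := fun x hx => hτmax hx
  -- step (i) : bound on |u' t|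
  have hstep1 : ∀ t ∈ Icc a (a + h), |u' t| ≤ (C' * h) ^ (1 / (p - 1)) * M := by
    intro t ht
    have hat : a ≤ t := ht.1
    have hsubt : Icc a t ⊆ Icc 0 (piP p) := fun x hx =>
      hJsub ⟨hx.1, le_trans hx.2 ht.2⟩
    have hFTC : ∫ x in a..t, -((lam + r x) * |u x| ^ (p - 2) * u x) =
        |u' t| ^ (p - 2) * u' t - |u' a| ^ (p - 2) * u' a := by
      apply intervalIntegral.integral_eq_sub_of_hasDerivAt_of_le hat
      · exact (Phi_cont hp).comp_continuousOn (hu'.mono hsubt)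
      · intro x hx
        apply hODE x
        constructor
        · linarith [ha.1, hx.1]
        · calc x < t := hx.2
            _ ≤ piP p := (hsubt ⟨hat, le_refl t⟩).2
      · apply ContinuousOn.intervalIntegrable
        rw [uIcc_of_le hat]
        have : ContinuousOn (fun x => -((lam + r x) * (|u x| ^ (p - 2) * u x)))
            (Icc a t) := by
          apply ContinuousOn.neg
          exact (continuousOn_const.add (hr.mono hsubt)).mul
            ((Phi_cont hp).comp_continuousOn (hucont.mono hsubt))
        exact this.congr (fun x _ => by ring)
    have hPhia : |u' a| ^ (p - 2) * u' a = 0 := by rw [hu'a]; ring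
    rw [hPhia, sub_zero] at hFTC
    have hnorm : |(|u' t| ^ (p - 2) * u' t)| ≤ C' * M ^ (p - 1) * h := by
      rw [← hFTC]
      have hb := intervalIntegral.norm_integral_le_of_norm_le_const
        (C := C' * M ^ (p - 1))
        (f := fun x => -((lam + r x) * |u x| ^ (p - 2) * u x)) (a := a) (b := t) ?_
      · rw [Real.norm_eq_abs] at hb
        calc |∫ x in a..t, -((lam + r x) * |u x| ^ (p - 2) * u x)|
            ≤ C' * M ^ (p - 1) * |t - a| := hb
          _ ≤ C' * M ^ (p - 1) * h := by
              apply mul_le_mul_of_nonneg_left _ (by positivity)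
              rw [abs_of_nonneg (by linarith : (0:ℝ) ≤ t - a)]
              linarith [ht.2]
      · intro x hx
        rw [uIoc_of_le hat] at hx
        have hxJ : x ∈ Icc a (a + h) := ⟨le_of_lt hx.1, le_trans hx.2 ht.2⟩
        rw [norm_neg, Real.norm_eq_abs, mul_assoc, abs_mul, absPhi hp]
        apply mul_le_mul (hC' x (hJsub hxJ)) _ (by positivity) (le_of_lt hC'0)
        exact Real.rpow_le_rpow (abs_nonneg _) (hMb x hxJ) (by linarith)
    calc |u' t| = |(|u' t| ^ (p - 2) * u' t)| ^ (1 / (p - 1)) := abs_eq_absPhi_rpow hp _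
      _ ≤ (C' * M ^ (p - 1) * h) ^ (1 / (p - 1)) :=
          Real.rpow_le_rpow (abs_nonneg _) hnorm (le_of_lt he0)
      _ = (C' * h) ^ (1 / (p - 1)) * M := by
          rw [show C' * M ^ (p - 1) * h = (C' * h) * M ^ (p - 1) by ring]
          rw [Real.mul_rpow (by positivity) (by positivity),
            ← Real.rpow_mul hM0, mul_one_div,
            div_self (ne_of_gt hp1), Real.rpow_one]
  -- step (ii) : bound on |u t|
  have hstep2 : ∀ t ∈ Icc a (a + h), |u t| ≤ h * ((C' * h) ^ (1 / (p - 1)) * M) := by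
    intro t ht
    have hat : a ≤ t := ht.1
    have hsubt : Icc a t ⊆ Icc 0 (piP p) := fun x hx =>
      hJsub ⟨hx.1, le_trans hx.2 ht.2⟩
    have hFTC : ∫ x in a..t, u' x = u t - u a := by
      apply intervalIntegral.integral_eq_sub_of_hasDerivAt_of_le hat
        (hucont.mono hsubt)
      · intro x hx
        apply (hderiv x (hsubt ⟨le_of_lt hx.1, le_of_lt hx.2⟩)).hasDerivAt
        apply Icc_mem_nhds
        · linarith [ha.1, hx.1]
        · calc x < t := hx.2
            _ ≤ piP p := (hsubt ⟨hat, le_refl t⟩).2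
      · apply ContinuousOn.intervalIntegrable
        rw [uIcc_of_le hat]
        exact hu'.mono hsubt
    rw [hua, sub_zero] at hFTC
    rw [← hFTC]
    have hb := intervalIntegral.norm_integral_le_of_norm_le_const
      (C := (C' * h) ^ (1 / (p - 1)) * M) (f := u') (a := a) (b := t) ?_
    · rw [Real.norm_eq_abs] at hb
      calc |∫ x in a..t, u' x| ≤ (C' * h) ^ (1 / (p - 1)) * M * |t - a| := hb
        _ ≤ (C' * h) ^ (1 / (p - 1)) * M * h := by
            apply mul_le_mul_of_nonneg_left _ (by positivity)
            rw [abs_of_nonneg (by linarith : (0:ℝ) ≤ t - a)]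
            linarith [ht.2]
        _ = h * ((C' * h) ^ (1 / (p - 1)) * M) := by ring
    · intro x hx
      rw [uIoc_of_le hat] at hx
      exact hstep1 x ⟨le_of_lt hx.1, le_trans hx.2 ht.2⟩
  -- conclude M = 0
  have hM : M ≤ h * (C' * h) ^ (1 / (p - 1)) * M := by
    have := hstep2 τ hτJ
    rw [← hMdef] at this
    linarith [this]
  have hMz : M = 0 := by
    by_contra hne
    have hMpos : 0 < M := lt_of_le_of_ne hM0 (Ne.symm hne)
    nlinarith
  intro x hx
  have := hMb x hx
  rw [hMz] at this
  exact abs_eq_zero.mp (le_antisymm this (abs_nonneg _))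

end stage4

section stage4b
variable {p lam : ℝ} {r u u' : ℝ → ℝ}

lemma vanish_bwd (hp : 1 < p)
    (hr : ContinuousOn r (Icc 0 (piP p)))
    (hu' : ContinuousOn u' (Icc 0 (piP p)))
    (hucont : ContinuousOn u (Icc 0 (piP p)))
    (hderiv : ∀ x ∈ Icc (0:ℝ) (piP p), HasDerivWithinAt u (u' x) (Icc 0 (piP p)) x)
    (hODE : ∀ x ∈ Ioo (0:ℝ) (piP p),
      HasDerivAt (fun y => |u' y| ^ (p - 2) * u' y)
        (-((lam + r x) * |u x| ^ (p - 2) * u x)) x)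
    {a : ℝ} (ha : a ∈ Ioc 0 (piP p)) (hua : u a = 0) (hu'a : u' a = 0) :
    ∃ h > 0, ∀ x ∈ Icc (a - h) a, u x = 0 := by
  have hp1 : (0:ℝ) < p - 1 := by linarith
  have he0 : (0:ℝ) < 1 / (p - 1) := by positivity
  obtain ⟨C, hC⟩ := isCompact_Icc.exists_bound_of_continuousOn
    (continuousOn_const.add hr : ContinuousOn (fun x => lam + r x) (Icc 0 (piP p)))
  set C' := max C 1 with hC'def
  have hC'0 : (0:ℝ) < C' := lt_of_lt_of_le one_pos (le_max_right _ _)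
  have hC' : ∀ x ∈ Icc (0:ℝ) (piP p), |lam + r x| ≤ C' := fun x hx =>
    le_trans (hC x hx) (le_max_left _ _)
  have hten : Tendsto (fun h : ℝ => h * (C' * h) ^ (1 / (p - 1))) (nhdsWithin 0 (Ioi 0))
      (nhds 0) := by
    have h1 : ContinuousAt (fun h : ℝ => h * (C' * h) ^ (1 / (p - 1))) 0 := by
      apply continuousAt_id.mul
      exact ((continuous_const.mul continuous_id).continuousAt).rpow_const (Or.inr (le_of_lt he0))
    have := h1.tendsto
    have hval : (0:ℝ) * (C' * 0) ^ (1 / (p - 1)) = 0 := by ring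
    rw [hval] at this
    exact this.mono_left nhdsWithin_le_nhds
  have hev1 : ∀ᶠ h in nhdsWithin (0:ℝ) (Ioi 0),
      h * (C' * h) ^ (1 / (p - 1)) < 1 := hten (Iio_mem_nhds one_pos)
  have hev2 : ∀ᶠ h in nhdsWithin (0:ℝ) (Ioi 0), h < a :=
    nhdsWithin_le_nhds (Iio_mem_nhds ha.1)
  have hev3 : ∀ᶠ h in nhdsWithin (0:ℝ) (Ioi 0), 0 < h := eventually_mem_nhdsWithin
  obtain ⟨h, hD1, hha, hh0⟩ := (hev1.and (hev2.and hev3)).exists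
  refine ⟨h, hh0, ?_⟩
  have hJsub : Icc (a - h) a ⊆ Icc 0 (piP p) := fun x hx =>
    ⟨by linarith [hx.1], le_trans hx.2 ha.2⟩
  obtain ⟨τ, hτJ, hτmax⟩ := isCompact_Icc.exists_isMaxOn
    (nonempty_Icc.mpr (by linarith : a - h ≤ a))
    ((hucont.mono hJsub).abs)
  set M := |u τ| with hMdef
  have hM0 : 0 ≤ M := abs_nonneg _
  have hMb : ∀ x ∈ Icc (a - h) a, |u x| ≤ M := fun x hx => hτmax hx
  have hstep1 : ∀ t ∈ Icc (a - h) a, |u' t| ≤ (C' * h) ^ (1 / (p - 1)) * M := by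
    intro t ht
    have hat : t ≤ a := ht.2
    have hsubt : Icc t a ⊆ Icc 0 (piP p) := fun x hx =>
      hJsub ⟨le_trans ht.1 hx.1, hx.2⟩
    have hFTC : ∫ x in t..a, -((lam + r x) * |u x| ^ (p - 2) * u x) =
        |u' a| ^ (p - 2) * u' a - |u' t| ^ (p - 2) * u' t := by
      apply intervalIntegral.integral_eq_sub_of_hasDerivAt_of_le hat
      · exact (Phi_cont hp).comp_continuousOn (hu'.mono hsubt)
      · intro x hx
        apply hODE x
        constructor
        · linarith [ht.1, hx.1]
        · exact lt_of_lt_of_le hx.2 ha.2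
      · apply ContinuousOn.intervalIntegrable
        rw [uIcc_of_le hat]
        have : ContinuousOn (fun x => -((lam + r x) * (|u x| ^ (p - 2) * u x)))
            (Icc t a) := by
          apply ContinuousOn.neg
          exact (continuousOn_const.add (hr.mono hsubt)).mul
            ((Phi_cont hp).comp_continuousOn (hucont.mono hsubt))
        exact this.congr (fun x _ => by ring)
    have hPhia : |u' a| ^ (p - 2) * u' a = 0 := by rw [hu'a]; ring
    rw [hPhia, zero_sub] at hFTC
    have hnorm : |(|u' t| ^ (p - 2) * u' t)| ≤ C' * M ^ (p - 1) * h := by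
      have habs : |(|u' t| ^ (p - 2) * u' t)| =
          |∫ x in t..a, -((lam + r x) * |u x| ^ (p - 2) * u x)| := by
        rw [hFTC, abs_neg]
      rw [habs]
      have hb := intervalIntegral.norm_integral_le_of_norm_le_const
        (C := C' * M ^ (p - 1))
        (f := fun x => -((lam + r x) * |u x| ^ (p - 2) * u x)) (a := t) (b := a) ?_
      · rw [Real.norm_eq_abs] at hb
        calc |∫ x in t..a, -((lam + r x) * |u x| ^ (p - 2) * u x)|
            ≤ C' * M ^ (p - 1) * |a - t| := hb
          _ ≤ C' * M ^ (p - 1) * h := by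
              apply mul_le_mul_of_nonneg_left _ (by positivity)
              rw [abs_of_nonneg (by linarith : (0:ℝ) ≤ a - t)]
              linarith [ht.1]
      · intro x hx
        rw [uIoc_of_le hat] at hx
        have hxJ : x ∈ Icc (a - h) a := ⟨le_trans ht.1 (le_of_lt hx.1), hx.2⟩
        rw [norm_neg, Real.norm_eq_abs, mul_assoc, abs_mul, absPhi hp]
        apply mul_le_mul (hC' x (hJsub hxJ)) _ (by positivity) (le_of_lt hC'0)
        exact Real.rpow_le_rpow (abs_nonneg _) (hMb x hxJ) (by linarith)
    calc |u' t| = |(|u' t| ^ (p - 2) * u' t)| ^ (1 / (p - 1)) := abs_eq_absPhi_rpow hp _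
      _ ≤ (C' * M ^ (p - 1) * h) ^ (1 / (p - 1)) :=
          Real.rpow_le_rpow (abs_nonneg _) hnorm (le_of_lt he0)
      _ = (C' * h) ^ (1 / (p - 1)) * M := by
          rw [show C' * M ^ (p - 1) * h = (C' * h) * M ^ (p - 1) by ring]
          rw [Real.mul_rpow (by positivity) (by positivity),
            ← Real.rpow_mul hM0, mul_one_div,
            div_self (ne_of_gt hp1), Real.rpow_one]
  have hstep2 : ∀ t ∈ Icc (a - h) a, |u t| ≤ h * ((C' * h) ^ (1 / (p - 1)) * M) := by
    intro t ht
    have hat : t ≤ a := ht.2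
    have hsubt : Icc t a ⊆ Icc 0 (piP p) := fun x hx =>
      hJsub ⟨le_trans ht.1 hx.1, hx.2⟩
    have hFTC : ∫ x in t..a, u' x = u a - u t := by
      apply intervalIntegral.integral_eq_sub_of_hasDerivAt_of_le hat
        (hucont.mono hsubt)
      · intro x hx
        apply (hderiv x (hsubt ⟨le_of_lt hx.1, le_of_lt hx.2⟩)).hasDerivAt
        apply Icc_mem_nhds
        · linarith [ht.1, hx.1]
        · exact lt_of_lt_of_le hx.2 ha.2
      · apply ContinuousOn.intervalIntegrable
        rw [uIcc_of_le hat]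
        exact hu'.mono hsubt
    rw [hua, zero_sub] at hFTC
    have habs : |u t| = |∫ x in t..a, u' x| := by rw [hFTC, abs_neg]
    rw [habs]
    have hb := intervalIntegral.norm_integral_le_of_norm_le_const
      (C := (C' * h) ^ (1 / (p - 1)) * M) (f := u') (a := t) (b := a) ?_
    · rw [Real.norm_eq_abs] at hb
      calc |∫ x in t..a, u' x| ≤ (C' * h) ^ (1 / (p - 1)) * M * |a - t| := hb
        _ ≤ (C' * h) ^ (1 / (p - 1)) * M * h := by
            apply mul_le_mul_of_nonneg_left _ (by positivity)
            rw [abs_of_nonneg (by linarith : (0:ℝ) ≤ a - t)]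
            linarith [ht.1]
        _ = h * ((C' * h) ^ (1 / (p - 1)) * M) := by ring
    · intro x hx
      rw [uIoc_of_le hat] at hx
      exact hstep1 x ⟨le_trans ht.1 (le_of_lt hx.1), hx.2⟩
  have hM : M ≤ h * (C' * h) ^ (1 / (p - 1)) * M := by
    have := hstep2 τ hτJ
    rw [← hMdef] at this
    linarith [this]
  have hMz : M = 0 := by
    by_contra hne
    have hMpos : 0 < M := lt_of_le_of_ne hM0 (Ne.symm hne)
    nlinarith
  intro x hx
  have := hMb x hx
  rw [hMz] at this
  exact abs_eq_zero.mp (le_antisymm this (abs_nonneg _))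

end stage4b

section stage5
variable {p lam : ℝ}

lemma riccati_alg (hp : 1 < p) {U V R' : ℝ} (hU : U ≠ 0) :
    (R' * |U| ^ (p - 2) * U * (|U| ^ (p - 2) * U) -
        -(|V| ^ (p - 2) * V) * ((p - 1) * |U| ^ (p - 2) * V)) /
      (|U| ^ (p - 2) * U) ^ 2 =
    R' + (p - 1) * |(-(|V| ^ (p - 2) * V)) / (|U| ^ (p - 2) * U)| ^ (p / (p - 1)) := by
  have hp1 : (0:ℝ) < p - 1 := by linarith
  have hA : 0 < |U| := abs_pos.mpr hU
  have hApm2 : (0:ℝ) < |U| ^ (p - 2) := Real.rpow_pos_of_pos hA _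
  have hAp : (0:ℝ) < |U| ^ p := Real.rpow_pos_of_pos hA _
  have hU2 : |U| ^ (p - 2) * U ^ 2 = |U| ^ p := by
    rw [← sq_abs U, ← Real.rpow_natCast |U| 2, ← Real.rpow_add hA]
    norm_num
  have hden : (|U| ^ (p - 2) * U) ^ 2 = |U| ^ (p - 2) * |U| ^ p := by
    rw [mul_pow, pow_two, mul_assoc, hU2]
  rcases eq_or_ne V 0 with hV | hV
  · subst hV
    have h0 : |(0:ℝ)| ^ (p - 2) * 0 = 0 := by ring
    rw [h0, neg_zero, zero_div, abs_zero,
      Real.zero_rpow (ne_of_gt (div_pos (by linarith : (0:ℝ) < p) hp1))]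
    rw [div_eq_iff (pow_ne_zero 2 (Phi_ne_zero hp hU)), pow_two]
    ring
  · have hBv : 0 < |V| := abs_pos.mpr hV
    have hv2 : |V| ^ (p - 2) * V ^ 2 = |V| ^ p := by
      rw [← sq_abs V, ← Real.rpow_natCast |V| 2, ← Real.rpow_add hBv]
      norm_num
    have hnum : R' * |U| ^ (p - 2) * U * (|U| ^ (p - 2) * U) -
        -(|V| ^ (p - 2) * V) * ((p - 1) * |U| ^ (p - 2) * V) =
        |U| ^ (p - 2) * (R' * |U| ^ p + (p - 1) * |V| ^ p) := by
      rw [← hU2, ← hv2]; ring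
    have habs : |(-(|V| ^ (p - 2) * V)) / (|U| ^ (p - 2) * U)| ^ (p / (p - 1)) =
        |V| ^ p / |U| ^ p := by
      rw [abs_div, abs_neg, absPhi hp, absPhi hp,
        Real.div_rpow (Real.rpow_nonneg (abs_nonneg V) _) (Real.rpow_nonneg (abs_nonneg U) _),
        ← Real.rpow_mul (abs_nonneg V), ← Real.rpow_mul (abs_nonneg U),
        show (p - 1) * (p / (p - 1)) = p by field_simp]
    rw [hnum, hden, habs]
    field_simp

end stage5

section stage6
variable {p lam K : ℝ}

/-- the weight function φ -/
noncomputable def phiW (p lam c : ℝ) (s : ℝ) : ℝ :=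
  min (fR p lam c) (fR p lam s) / fR p lam s

/-- truncated primitive B -/
noncomputable def BW (p lam c : ℝ) (y : ℝ) : ℝ := ∫ s in (0:ℝ)..y, phiW p lam c s

lemma phiW_cont (hp1 : 0 < p - 1) (hlam0 : 0 < lam) (c : ℝ) :
    Continuous (phiW p lam c) := by
  unfold phiW
  exact (continuous_const.min (fR_cont hp1)).div (fR_cont hp1)
    (fun s => ne_of_gt (fR_pos hp1 hlam0 s))

lemma phiW_pos (hp1 : 0 < p - 1) (hlam0 : 0 < lam) (c s : ℝ) :
    0 < phiW p lam c s := by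
  unfold phiW
  exact div_pos (lt_min (fR_pos hp1 hlam0 c) (fR_pos hp1 hlam0 s)) (fR_pos hp1 hlam0 s)

lemma phiW_le_one (hp1 : 0 < p - 1) (hlam0 : 0 < lam) (c s : ℝ) :
    phiW p lam c s ≤ 1 := by
  unfold phiW
  rw [div_le_one (fR_pos hp1 hlam0 s)]
  exact min_le_right _ _

lemma phiW_mul (hp1 : 0 < p - 1) (hlam0 : 0 < lam) (c s : ℝ) :
    phiW p lam c s * fR p lam s = min (fR p lam c) (fR p lam s) := by
  unfold phiW
  exact div_mul_cancel₀ _ (ne_of_gt (fR_pos hp1 hlam0 s))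

lemma fR_mono (hp1 : 0 < p - 1) {s t : ℝ} (hs : 0 ≤ s) (hst : s ≤ t) :
    fR p lam s ≤ fR p lam t := by
  unfold fR
  have h1 : |s| ^ (p / (p - 1)) ≤ |t| ^ (p / (p - 1)) := by
    apply Real.rpow_le_rpow (abs_nonneg s)
    · rw [abs_of_nonneg hs, abs_of_nonneg (le_trans hs hst)]; exact hst
    · exact le_of_lt (div_pos (by linarith) hp1)
  nlinarith

lemma BW_hasDeriv (hp1 : 0 < p - 1) (hlam0 : 0 < lam) (c y : ℝ) :
    HasDerivAt (BW p lam c) (phiW p lam c y) y := by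
  apply intervalIntegral.integral_hasDerivAt_right
    ((phiW_cont hp1 hlam0 c).intervalIntegrable _ _)
    ⟨univ, univ_mem, (phiW_cont hp1 hlam0 c).measurable.aestronglyMeasurable.restrict⟩
    (phiW_cont hp1 hlam0 c).continuousAt

lemma BW_eq (hp1 : 0 < p - 1) (hlam0 : 0 < lam) {c y : ℝ} (hc : 0 < c) (hy : c ≤ y) :
    BW p lam c y = c + fR p lam c * ∫ s in c..y, (fR p lam s)⁻¹ := by
  have hint : ∀ a b : ℝ, IntervalIntegrable (phiW p lam c) volume a b :=
    fun a b => (phiW_cont hp1 hlam0 c).intervalIntegrable _ _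
  have hsplit := intervalIntegral.integral_add_adjacent_intervals
    (hint 0 c) (hint c y)
  have h1 : ∫ s in (0:ℝ)..c, phiW p lam c s = c := by
    have : ∫ s in (0:ℝ)..c, phiW p lam c s = ∫ s in (0:ℝ)..c, (1:ℝ) := by
      apply intervalIntegral.integral_congr
      intro s hs
      rw [uIcc_of_le (le_of_lt hc)] at hs
      unfold phiW
      rw [min_eq_right (fR_mono hp1 hs.1 hs.2)]
      exact div_self (ne_of_gt (fR_pos hp1 hlam0 s))
    rw [this]
    simp
  have h2 : ∫ s in c..y, phiW p lam c s = fR p lam c * ∫ s in c..y, (fR p lam s)⁻¹ := by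
    rw [← intervalIntegral.integral_const_mul]
    apply intervalIntegral.integral_congr
    intro s hs
    rw [uIcc_of_le hy] at hs
    unfold phiW
    rw [min_eq_left (fR_mono hp1 (le_of_lt hc) hs.1)]
    ring
  unfold BW
  rw [← hsplit, h1, h2]

lemma BW_odd (hp1 : 0 < p - 1) (hlam0 : 0 < lam) (c y : ℝ) :
    BW p lam c (-y) = -BW p lam c y := by
  have heven : ∀ s : ℝ, phiW p lam c (-s) = phiW p lam c s := by
    intro s; unfold phiW fR; rw [abs_neg]
  have h := intervalIntegral.integral_comp_neg (fun s => phiW p lam c s) (a := (0:ℝ)) (b := y)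
  have h2 : ∫ x in (0:ℝ)..y, phiW p lam c (-x) = ∫ x in (0:ℝ)..y, phiW p lam c x :=
    intervalIntegral.integral_congr (fun x _ => heven x)
  unfold BW
  rw [← h2, h, neg_zero, ← intervalIntegral.integral_symm]

lemma BW_tendsto_top (hp : 1 < p) (hlam0 : 0 < lam) (hlam1 : lam < p - 1)
    (hK : K = (lam / (p - 1)) ^ (1 / p)) :
    Tendsto (BW p lam (K ^ (p - 1) * (cotP p (K * piP p / 2)) ^ (p - 1))) atTop
      (nhds (K ^ (p - 1) * (cotP p (K * piP p / 2)) ^ (p - 1) +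
        fR p lam (K ^ (p - 1) * (cotP p (K * piP p / 2)) ^ (p - 1)) * (piP p / 2))) := by
  have hp1 : (0:ℝ) < p - 1 := by linarith
  set c := K ^ (p - 1) * (cotP p (K * piP p / 2)) ^ (p - 1) with hcdef
  have hc0 : 0 < c := c_pos hp hlam0 hlam1 hK
  have hInt := integrableOn_inv_fR hp hlam0 hc0
  have h1 : Tendsto (fun y : ℝ => ∫ s in c..y, (fR p lam s)⁻¹) atTop
      (nhds (piP p / 2)) := by
    have := MeasureTheory.intervalIntegral_tendsto_integral_Ioi c hInt tendsto_id
    rw [key_identity hp hlam0 hlam1 hK] at this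
    exact this
  have h2 : Tendsto (fun y : ℝ => c + fR p lam c * ∫ s in c..y, (fR p lam s)⁻¹) atTop
      (nhds (c + fR p lam c * (piP p / 2))) :=
    tendsto_const_nhds.add (tendsto_const_nhds.mul h1)
  apply h2.congr'
  filter_upwards [eventually_ge_atTop c] with y hy
  exact (BW_eq hp1 hlam0 hc0 hy).symm

lemma BW_tendsto_bot (hp : 1 < p) (hlam0 : 0 < lam) (hlam1 : lam < p - 1)
    (hK : K = (lam / (p - 1)) ^ (1 / p)) :
    Tendsto (BW p lam (K ^ (p - 1) * (cotP p (K * piP p / 2)) ^ (p - 1))) atBot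
      (nhds (-(K ^ (p - 1) * (cotP p (K * piP p / 2)) ^ (p - 1) +
        fR p lam (K ^ (p - 1) * (cotP p (K * piP p / 2)) ^ (p - 1)) * (piP p / 2)))) := by
  have hp1 : (0:ℝ) < p - 1 := by linarith
  set c := K ^ (p - 1) * (cotP p (K * piP p / 2)) ^ (p - 1) with hcdef
  have h1 := ((BW_tendsto_top hp hlam0 hlam1 hK).comp tendsto_neg_atBot_atTop).neg
  apply h1.congr
  intro y
  simp only [Function.comp]
  rw [← BW_odd hp1 hlam0, neg_neg]

end stage6
section core
variable {p lam K : ℝ} {r u u' : ℝ → ℝ}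

set_option maxHeartbeats 2000000 in
lemma core_estimate (hp : 1 < p) (hlam0 : 0 < lam) (hlam1 : lam < p - 1)
    (hK : K = (lam / (p - 1)) ^ (1 / p))
    (hr : ContinuousOn r (Icc 0 (piP p)))
    (hu' : ContinuousOn u' (Icc 0 (piP p)))
    (hderiv : ∀ x ∈ Icc (0:ℝ) (piP p), HasDerivWithinAt u (u' x) (Icc 0 (piP p)) x)
    (hu0 : u 0 = 0) (huπ : u (piP p) = 0)
    (hODE : ∀ x ∈ Ioo (0:ℝ) (piP p),
      HasDerivAt (fun y => |u' y| ^ (p - 2) * u' y)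
        (-((lam + r x) * |u x| ^ (p - 2) * u x)) x)
    {x₀ : ℝ} (hx₀ : x₀ ∈ Ioo 0 (piP p)) (hux₀ : 0 < u x₀) :
    (∫ x in (0:ℝ)..piP p, max (r x) 0) >
      2 * K ^ (p - 1) * (cotP p (K * piP p / 2)) ^ (p - 1) := by
  have hp1 : (0:ℝ) < p - 1 := by linarith
  have hπ : 0 < piP p := piP_pos hp
  have hucont : ContinuousOn u (Icc 0 (piP p)) :=
    fun x hx => (hderiv x hx).continuousWithinAt
  rw [show (2:ℝ) * K ^ (p - 1) * (cotP p (K * piP p / 2)) ^ (p - 1) =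
    2 * (K ^ (p - 1) * (cotP p (K * piP p / 2)) ^ (p - 1)) by ring]
  set c := K ^ (p - 1) * (cotP p (K * piP p / 2)) ^ (p - 1) with hcdef
  have hc0 : 0 < c := c_pos hp hlam0 hlam1 hK
  set fc := fR p lam c with hfcdef
  have hfc0 : 0 < fc := fR_pos hp1 hlam0 c
  have hfc_gt : lam < fc := by
    rw [hfcdef]
    unfold fR
    have : 0 < (p - 1) * |c| ^ (p / (p - 1)) := by
      have : 0 < |c| := abs_pos.mpr (ne_of_gt hc0)
      positivity
    linarith
  -- the zeros a and b
  have hIccsub : Icc (0:ℝ) x₀ ⊆ Icc 0 (piP p) := Icc_subset_Icc le_rfl (le_of_lt hx₀.2)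
  have hS1closed : IsClosed (Icc (0:ℝ) x₀ ∩ u ⁻¹' {0}) :=
    (hucont.mono hIccsub).preimage_isClosed_of_isClosed isClosed_Icc isClosed_singleton
  have hS1ne : (Icc (0:ℝ) x₀ ∩ u ⁻¹' {0}).Nonempty :=
    ⟨0, ⟨le_rfl, le_of_lt hx₀.1⟩, hu0⟩
  have hS1bdd : BddAbove (Icc (0:ℝ) x₀ ∩ u ⁻¹' {0}) :=
    (bddAbove_Icc).mono inter_subset_left
  set a := sSup (Icc (0:ℝ) x₀ ∩ u ⁻¹' {0}) with hadef
  have ha_mem := hS1closed.csSup_mem hS1ne hS1bdd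
  have hua : u a = 0 := ha_mem.2
  have ha0 : 0 ≤ a := ha_mem.1.1
  have hax₀ : a < x₀ := lt_of_le_of_ne ha_mem.1.2 (fun h => by
    rw [h] at hua; exact (ne_of_gt hux₀) hua)
  have ha_ub : ∀ x, x ∈ Icc (0:ℝ) x₀ ∩ u ⁻¹' {0} → x ≤ a :=
    fun x hx => le_csSup hS1bdd hx
  have hIccsub2 : Icc x₀ (piP p) ⊆ Icc 0 (piP p) := Icc_subset_Icc (le_of_lt hx₀.1) le_rfl
  have hS2closed : IsClosed (Icc x₀ (piP p) ∩ u ⁻¹' {0}) :=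
    (hucont.mono hIccsub2).preimage_isClosed_of_isClosed isClosed_Icc isClosed_singleton
  have hS2ne : (Icc x₀ (piP p) ∩ u ⁻¹' {0}).Nonempty :=
    ⟨piP p, ⟨le_of_lt hx₀.2, le_rfl⟩, huπ⟩
  have hS2bdd : BddBelow (Icc x₀ (piP p) ∩ u ⁻¹' {0}) :=
    (bddBelow_Icc).mono inter_subset_left
  set b := sInf (Icc x₀ (piP p) ∩ u ⁻¹' {0}) with hbdef
  have hb_mem := hS2closed.csInf_mem hS2ne hS2bdd
  have hub : u b = 0 := hb_mem.2
  have hbπ : b ≤ piP p := hb_mem.1.2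
  have hx₀b : x₀ < b := lt_of_le_of_ne hb_mem.1.1 (fun h => by
    rw [← h] at hub; exact (ne_of_gt hux₀) hub)
  have hb_lb : ∀ x, x ∈ Icc x₀ (piP p) ∩ u ⁻¹' {0} → b ≤ x :=
    fun x hx => csInf_le hS2bdd hx
  have hab : a < b := lt_trans hax₀ hx₀b
  have hab_sub : Icc a b ⊆ Icc 0 (piP p) := Icc_subset_Icc ha0 hbπ
  have hIoo_sub : Ioo a b ⊆ Ioo 0 (piP p) := fun x hx =>
    ⟨lt_of_le_of_lt ha0 hx.1, lt_of_lt_of_le hx.2 hbπ⟩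
  have hx₀mem : x₀ ∈ Ioo a b := ⟨hax₀, hx₀b⟩
  -- u does not vanish on (a,b)
  have hne : ∀ x ∈ Ioo a b, u x ≠ 0 := by
    intro x hx hux
    rcases le_or_gt x x₀ with h | h
    · exact absurd (ha_ub x ⟨⟨le_trans ha0 (le_of_lt hx.1), h⟩, hux⟩) (not_le.mpr hx.1)
    · exact absurd (hb_lb x ⟨⟨le_of_lt h, le_trans (le_of_lt hx.2) hbπ⟩, hux⟩)
        (not_le.mpr hx.2)
  -- u is positive on (a,b)
  have hupos : ∀ x ∈ Ioo a b, 0 < u x := by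
    intro x hx
    rcases lt_or_ge 0 (u x) with h | h
    · exact h
    · exfalso
      have hxne := hne x hx
      have hxneg : u x < 0 := lt_of_le_of_ne h hxne
      have hsub : uIcc x x₀ ⊆ Ioo a b :=
        Set.ordConnected_Ioo.uIcc_subset hx hx₀mem
      have h0mem : (0:ℝ) ∈ uIcc (u x) (u x₀) := by
        rw [mem_uIcc]
        exact Or.inl ⟨le_of_lt hxneg, le_of_lt hux₀⟩
      obtain ⟨z, hz, huz⟩ := intermediate_value_uIcc
        (hucont.mono (subset_trans hsub (subset_trans Ioo_subset_Icc_self hab_sub))) h0mem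
      exact hne z (hsub hz) huz
  -- boundary derivatives are nonzero
  have hNeA : (nhdsWithin a (Ioo a b)).NeBot := by
    apply mem_closure_iff_nhdsWithin_neBot.mp
    rw [closure_Ioo (ne_of_lt hab)]
    exact ⟨le_rfl, le_of_lt hab⟩
  have hNeB : (nhdsWithin b (Ioo a b)).NeBot := by
    apply mem_closure_iff_nhdsWithin_neBot.mp
    rw [closure_Ioo (ne_of_lt hab)]
    exact ⟨le_of_lt hab, le_rfl⟩
  have hamem : a ∈ Icc (0:ℝ) (piP p) := hab_sub ⟨le_rfl, le_of_lt hab⟩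
  have hbmem : b ∈ Icc (0:ℝ) (piP p) := hab_sub ⟨le_of_lt hab, le_rfl⟩
  have hu'a_ne : u' a ≠ 0 := by
    intro h0
    obtain ⟨h, hh0, hvan⟩ := vanish_fwd hp hr hu' hucont hderiv hODE
      (⟨ha0, lt_of_lt_of_le hab hbπ⟩ : a ∈ Ico 0 (piP p)) hua h0
    set z := min (a + h / 2) ((a + b) / 2) with hzdef
    have hza : a < z := lt_min (by linarith) (by linarith)
    have hzb : z < b := lt_of_le_of_lt (min_le_right _ _) (by linarith)
    have hzh : z ≤ a + h := le_trans (min_le_left _ _) (by linarith)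
    have := hvan z ⟨le_of_lt hza, hzh⟩
    exact (ne_of_gt (hupos z ⟨hza, hzb⟩)) this
  have hu'b_ne : u' b ≠ 0 := by
    intro h0
    obtain ⟨h, hh0, hvan⟩ := vanish_bwd hp hr hu' hucont hderiv hODE
      (⟨lt_of_le_of_lt ha0 hab, hbπ⟩ : b ∈ Ioc 0 (piP p)) hub h0
    set z := max (b - h / 2) ((a + b) / 2) with hzdef
    have hzb : z < b := max_lt (by linarith) (by linarith)
    have hza : a < z := lt_of_lt_of_le (by linarith) (le_max_right _ _)
    have hzh : b - h ≤ z := le_trans (by linarith) (le_max_left _ _)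
    have := hvan z ⟨hzh, le_of_lt hzb⟩
    exact (ne_of_gt (hupos z ⟨hza, hzb⟩)) this
  have hIooIcc : Ioo a b ⊆ Icc 0 (piP p) \ {a} := fun x hx =>
    ⟨hab_sub (Ioo_subset_Icc_self hx), fun hxa => (ne_of_gt hx.1) (by
      simpa using hxa)⟩
  have hu'a_pos : 0 < u' a := by
    rcases lt_or_ge 0 (u' a) with h | h
    · exact h
    have hge : 0 ≤ u' a := by
      have hslope := hasDerivWithinAt_iff_tendsto_slope.mp (hderiv a hamem)
      have hslope2 : Tendsto (slope u a) (nhdsWithin a (Ioo a b)) (nhds (u' a)) :=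
        hslope.mono_left (nhdsWithin_mono a hIooIcc)
      apply ge_of_tendsto hslope2
      filter_upwards [self_mem_nhdsWithin] with x hx
      rw [slope_def_field, hua, sub_zero]
      exact div_nonneg (le_of_lt (hupos x hx)) (by linarith [hx.1])
    exact lt_of_le_of_ne hge (Ne.symm hu'a_ne)
  have hIooIccb : Ioo a b ⊆ Icc 0 (piP p) \ {b} := fun x hx =>
    ⟨hab_sub (Ioo_subset_Icc_self hx), fun hxb => (ne_of_lt hx.2) (by
      simpa using hxb)⟩
  have hu'b_neg : u' b < 0 := by
    rcases lt_or_ge (u' b) 0 with h | h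
    · exact h
    exfalso
    have hle : u' b ≤ 0 := by
      have hslope := hasDerivWithinAt_iff_tendsto_slope.mp (hderiv b hbmem)
      have hslope2 : Tendsto (slope u b) (nhdsWithin b (Ioo a b)) (nhds (u' b)) :=
        hslope.mono_left (nhdsWithin_mono b hIooIccb)
      apply le_of_tendsto hslope2
      filter_upwards [self_mem_nhdsWithin] with x hx
      rw [slope_def_field, hub, sub_zero]
      apply div_nonpos_of_nonneg_of_nonpos (le_of_lt (hupos x hx))
      linarith [hx.2]
    exact hu'b_ne (le_antisymm hle h)
  -- the Riccati variable w
  set N : ℝ → ℝ := fun t => |u' t| ^ (p - 2) * u' t with hNdef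
  set D : ℝ → ℝ := fun t => |u t| ^ (p - 2) * u t with hDdef
  set w : ℝ → ℝ := fun t => -N t / D t with hwdef
  have hDpos : ∀ t ∈ Ioo a b, 0 < D t := fun t ht => Phi_pos hp (hupos t ht)
  have hwderiv : ∀ t ∈ Ioo a b,
      HasDerivAt w ((lam + r t) + (p - 1) * |w t| ^ (p / (p - 1))) t := by
    intro t ht
    have hNd : HasDerivAt N (-((lam + r t) * |u t| ^ (p - 2) * u t)) t :=
      hODE t (hIoo_sub ht)
    have hcd : HasDerivAt (fun y => -N y) ((lam + r t) * |u t| ^ (p - 2) * u t) t := by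
      have := hNd.neg
      rwa [neg_neg] at this
    have hu_at : HasDerivAt u (u' t) t := by
      apply (hderiv t (hab_sub (Ioo_subset_Icc_self ht))).hasDerivAt
      apply Icc_mem_nhds (hIoo_sub ht).1 (hIoo_sub ht).2
    have hDd : HasDerivAt D ((p - 1) * |u t| ^ (p - 2) * u' t) t :=
      (Phi_hasDeriv hp (ne_of_gt (hupos t ht))).comp t hu_at

    have hdiv := hcd.div hDd (ne_of_gt (hDpos t ht))
    rw [riccati_alg hp (ne_of_gt (hupos t ht))] at hdiv
    exact hdiv
  have hwcont : ContinuousOn w (Ioo a b) := fun t ht =>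
    ((hwderiv t ht).differentiableAt.continuousAt).continuousWithinAt
  -- limits of w at the endpoints
  have hNcont : ContinuousOn N (Icc 0 (piP p)) :=
    (Phi_cont hp).comp_continuousOn hu'
  have hDcont : ContinuousOn D (Icc 0 (piP p)) :=
    (Phi_cont hp).comp_continuousOn hucont
  have hDa : D a = 0 := by rw [hDdef]; simp only; rw [hua]; ring
  have hDb : D b = 0 := by rw [hDdef]; simp only; rw [hub]; ring
  have hDtend_a : Tendsto D (nhdsWithin a (Ioo a b)) (nhdsWithin 0 (Ioi 0)) := by
    rw [tendsto_nhdsWithin_iff]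
    constructor
    · have := (hDcont a hamem).tendsto
      rw [hDa] at this
      exact this.mono_left (nhdsWithin_mono a (subset_trans Ioo_subset_Icc_self hab_sub))
    · filter_upwards [self_mem_nhdsWithin] with t ht
      exact hDpos t ht
  have hDtend_b : Tendsto D (nhdsWithin b (Ioo a b)) (nhdsWithin 0 (Ioi 0)) := by
    rw [tendsto_nhdsWithin_iff]
    constructor
    · have := (hDcont b hbmem).tendsto
      rw [hDb] at this
      exact this.mono_left (nhdsWithin_mono b (subset_trans Ioo_subset_Icc_self hab_sub))
    · filter_upwards [self_mem_nhdsWithin] with t ht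
      exact hDpos t ht
  have hNtend_a : Tendsto (fun t => -N t) (nhdsWithin a (Ioo a b)) (nhds (-N a)) :=
    (((hNcont a hamem).tendsto).mono_left
      (nhdsWithin_mono a (subset_trans Ioo_subset_Icc_self hab_sub))).neg
  have hNtend_b : Tendsto (fun t => -N t) (nhdsWithin b (Ioo a b)) (nhds (-N b)) :=
    (((hNcont b hbmem).tendsto).mono_left
      (nhdsWithin_mono b (subset_trans Ioo_subset_Icc_self hab_sub))).neg
  have hNa_pos : 0 < N a := Phi_pos hp hu'a_pos
  have hNb_neg : N b < 0 := Phi_neg hp hu'b_neg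
  have hwa : Tendsto w (nhdsWithin a (Ioo a b)) atBot := by
    have hinv : Tendsto (fun t => (D t)⁻¹) (nhdsWithin a (Ioo a b)) atTop :=
      tendsto_inv_nhdsGT_zero.comp hDtend_a
    have := hNtend_a.neg_mul_atTop (by linarith : -N a < 0) hinv
    apply this.congr
    intro t
    rw [hwdef]
    simp only
    rw [div_eq_mul_inv]
  have hwb : Tendsto w (nhdsWithin b (Ioo a b)) atTop := by
    have hinv : Tendsto (fun t => (D t)⁻¹) (nhdsWithin b (Ioo a b)) atTop :=
      tendsto_inv_nhdsGT_zero.comp hDtend_b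
    have := hNtend_b.pos_mul_atTop (by linarith : (0:ℝ) < -N b) hinv
    apply this.congr
    intro t
    rw [hwdef]
    simp only
    rw [div_eq_mul_inv]
  -- a zero of w
  obtain ⟨s₁, hs₁neg, hs₁mem⟩ :=
    ((hwa.eventually (eventually_lt_atBot 0)).and self_mem_nhdsWithin).exists
  obtain ⟨s₂, hs₂pos, hs₂mem⟩ :=
    ((hwb.eventually (eventually_gt_atTop 0)).and self_mem_nhdsWithin).exists
  have hs_sub : uIcc s₁ s₂ ⊆ Ioo a b :=
    Set.ordConnected_Ioo.uIcc_subset hs₁mem hs₂mem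
  obtain ⟨t₁, ht₁uIcc, hwt₁⟩ := intermediate_value_uIcc (hwcont.mono hs_sub)
    (by rw [mem_uIcc]; exact Or.inl ⟨le_of_lt hs₁neg, le_of_lt hs₂pos⟩)
  have ht₁mem : t₁ ∈ Ioo a b := hs_sub ht₁uIcc
  -- the positive bump
  set g : ℝ → ℝ := fun s => fc - min fc (fR p lam (w s)) with hgdef
  have hg_nonneg : ∀ s, 0 ≤ g s := fun s => by
    rw [hgdef]; simp only; linarith [min_le_left fc (fR p lam (w s))]
  have hfRw_t₁ : fR p lam (w t₁) = lam := by
    rw [hwt₁]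
    unfold fR
    rw [abs_zero, Real.zero_rpow (ne_of_gt (div_pos (by linarith) hp1))]
    ring
  have hg_t₁ : 0 < g t₁ := by
    rw [hgdef]
    simp only
    rw [hfRw_t₁, min_eq_right (le_of_lt hfc_gt)]
    linarith
  have hgc_at : ContinuousAt g t₁ := by
    have hwat : ContinuousAt w t₁ := (hwderiv t₁ ht₁mem).differentiableAt.continuousAt
    exact continuousAt_const.sub
      (continuousAt_const.min ((fR_cont hp1).continuousAt.comp hwat))
  have hev : ∀ᶠ s in nhds t₁, 0 < g s ∧ s ∈ Ioo a b := by
    apply Filter.Eventually.and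
    · exact hgc_at (Ioi_mem_nhds hg_t₁)
    · exact isOpen_Ioo.mem_nhds ht₁mem
  obtain ⟨η, hη0, hηball⟩ := Metric.eventually_nhds_iff.mp hev
  set α₀ := t₁ - η / 2 with hα₀def
  set β₀ := t₁ + η / 2 with hβ₀def
  have hα₀β₀ : α₀ < β₀ := by rw [hα₀def, hβ₀def]; linarith
  have hball : ∀ x ∈ Icc α₀ β₀, 0 < g x ∧ x ∈ Ioo a b := by
    intro x hx
    apply hηball
    rw [Real.dist_eq]
    rw [hα₀def] at hx; rw [hβ₀def] at hx
    rw [abs_lt]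
    constructor <;> [linarith [hx.1]; linarith [hx.2]]
  have hα₀mem : α₀ ∈ Ioo a b := (hball α₀ ⟨le_rfl, le_of_lt hα₀β₀⟩).2
  have hβ₀mem : β₀ ∈ Ioo a b := (hball β₀ ⟨le_of_lt hα₀β₀, le_rfl⟩).2
  have hgcont : ContinuousOn g (Ioo a b) := by
    apply continuousOn_const.sub
    exact (continuous_const.min (fR_cont hp1)).comp_continuousOn hwcont
  set δ := ∫ s in α₀..β₀, g s with hδdef
  have hδpos : 0 < δ := by
    rw [hδdef]
    apply intervalIntegral.intervalIntegral_pos_of_pos_on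
    · apply ContinuousOn.intervalIntegrable
      apply hgcont.mono
      rw [uIcc_of_le (le_of_lt hα₀β₀)]
      exact fun x hx => (hball x hx).2
    · exact fun x hx => (hball x (Ioo_subset_Icc_self hx)).1
    · exact hα₀β₀
  -- Ψ and its derivative bound
  set Ψ : ℝ → ℝ := fun t => BW p lam c (w t) with hΨdef
  have hΨd : ∀ t ∈ Ioo a b, HasDerivAt Ψ
      (phiW p lam c (w t) * ((lam + r t) + (p - 1) * |w t| ^ (p / (p - 1)))) t :=
    fun t ht => (BW_hasDeriv hp1 hlam0 c (w t)).comp t (hwderiv t ht)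
  have hbound : ∀ t, phiW p lam c (w t) * ((lam + r t) + (p - 1) * |w t| ^ (p / (p - 1)))
      ≤ min fc (fR p lam (w t)) + max (r t) 0 := by
    intro t
    have heq : (lam + r t) + (p - 1) * |w t| ^ (p / (p - 1)) = fR p lam (w t) + r t := by
      unfold fR; ring
    rw [heq, mul_add, phiW_mul hp1 hlam0]
    apply add_le_add_right
    rcases le_or_gt 0 (r t) with h | h
    · calc phiW p lam c (w t) * r t ≤ r t :=
          mul_le_of_le_one_left h (phiW_le_one hp1 hlam0 c (w t))
        _ ≤ max (r t) 0 := le_max_left _ _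
    · calc phiW p lam c (w t) * r t ≤ 0 :=
          le_of_lt (mul_neg_of_pos_of_neg (phiW_pos hp1 hlam0 c (w t)) h)
        _ ≤ max (r t) 0 := le_max_right _ _
  -- integrability of r₊ on [0,π]
  have hrint : IntervalIntegrable (fun x => max (r x) 0) volume 0 (piP p) := by
    apply ContinuousOn.intervalIntegrable
    rw [uIcc_of_le (le_of_lt hπ)]
    exact continuous_max.comp_continuousOn (hr.prodMk continuousOn_const)
  have hrplus_nonneg : ∀ x, 0 ≤ max (r x) 0 := fun x => le_max_right _ _
  -- the main estimate for compact subintervals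
  have hEst : ∀ α β, a < α → α ≤ α₀ → β₀ ≤ β → β < b →
      Ψ β - Ψ α ≤ fc * (β - α) - δ + ∫ x in (0:ℝ)..piP p, max (r x) 0 := by
    intro α β hαa hαα₀ hββ₀ hβb
    have hαβ : α ≤ β := le_trans hαα₀ (le_trans (le_of_lt hα₀β₀) hββ₀)
    have hsubαβ : Icc α β ⊆ Ioo a b := fun x hx =>
      ⟨lt_of_lt_of_le hαa hx.1, lt_of_le_of_lt hx.2 hβb⟩
    have hsubIcc : Icc α β ⊆ Icc 0 (piP p) :=
      subset_trans hsubαβ (subset_trans Ioo_subset_Icc_self hab_sub)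
    have hwcont' : ContinuousOn w (Icc α β) := hwcont.mono hsubαβ
    have hWcont : ContinuousOn
        (fun t => phiW p lam c (w t) * ((lam + r t) + (p - 1) * |w t| ^ (p / (p - 1))))
        (Icc α β) := by
      apply ContinuousOn.mul
      · exact (phiW_cont hp1 hlam0 c).comp_continuousOn hwcont'
      · apply ContinuousOn.add
        · exact continuousOn_const.add (hr.mono hsubIcc)
        · apply continuousOn_const.mul
          apply ContinuousOn.rpow_const
          · exact continuous_abs.comp_continuousOn hwcont'
          · intro x hx
            exact Or.inr (le_of_lt (div_pos (by linarith) hp1))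
    have hFTC : ∫ x in α..β,
        phiW p lam c (w x) * ((lam + r x) + (p - 1) * |w x| ^ (p / (p - 1))) =
        Ψ β - Ψ α := by
      apply intervalIntegral.integral_eq_sub_of_hasDerivAt_of_le hαβ
      · exact fun x hx => ((hΨd x (hsubαβ hx)).continuousAt).continuousWithinAt
      · exact fun x hx => hΨd x (hsubαβ ⟨le_of_lt hx.1, le_of_lt hx.2⟩)
      · apply ContinuousOn.intervalIntegrable
        rw [uIcc_of_le hαβ]
        exact hWcont
    have hmincont : ContinuousOn (fun x => min fc (fR p lam (w x))) (Icc α β) :=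
      (continuous_const.min (fR_cont hp1)).comp_continuousOn hwcont'
    have hint1 : IntervalIntegrable (fun x => min fc (fR p lam (w x))) volume α β := by
      apply ContinuousOn.intervalIntegrable
      rw [uIcc_of_le hαβ]; exact hmincont
    have hint2 : IntervalIntegrable (fun x => max (r x) 0) volume α β := by
      apply ContinuousOn.intervalIntegrable
      rw [uIcc_of_le hαβ]
      exact continuous_max.comp_continuousOn ((hr.mono hsubIcc).prodMk continuousOn_const)
    have hmono : Ψ β - Ψ α ≤
        (∫ x in α..β, min fc (fR p lam (w x))) + ∫ x in α..β, max (r x) 0 := by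
      rw [← hFTC, ← intervalIntegral.integral_add hint1 hint2]
      apply intervalIntegral.integral_mono_on hαβ
      · apply ContinuousOn.intervalIntegrable
        rw [uIcc_of_le hαβ]; exact hWcont
      · exact hint1.add hint2
      · exact fun x _ => hbound x
    have hminint : ∫ x in α..β, min fc (fR p lam (w x)) = fc * (β - α) - ∫ x in α..β, g x := by
      have : ∀ x, min fc (fR p lam (w x)) = fc - g x := by
        intro x; rw [hgdef]; simp only; ring
      rw [intervalIntegral.integral_congr (fun x _ => this x)]
      rw [intervalIntegral.integral_sub intervalIntegrable_const]
      · rw [intervalIntegral.integral_const, smul_eq_mul]; ring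
      · apply ContinuousOn.intervalIntegrable
        rw [uIcc_of_le hαβ]
        exact hgcont.mono hsubαβ
    have hgInt : ∫ x in α₀..β₀, g x ≤ ∫ x in α..β, g x := by
      apply intervalIntegral.integral_mono_interval hαα₀ (le_of_lt hα₀β₀) hββ₀
      · filter_upwards with x
        exact hg_nonneg x
      · apply ContinuousOn.intervalIntegrable
        rw [uIcc_of_le hαβ]
        exact hgcont.mono hsubαβ
    have hrInt : ∫ x in α..β, max (r x) 0 ≤ ∫ x in (0:ℝ)..piP p, max (r x) 0 := by
      apply intervalIntegral.integral_mono_interval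
        (hsubIcc ⟨le_rfl, hαβ⟩).1 hαβ (hsubIcc ⟨hαβ, le_rfl⟩).2
      · filter_upwards with x
        exact hrplus_nonneg x
      · exact hrint
    rw [hminint] at hmono
    rw [← hδdef] at hgInt
    linarith
  -- limits
  have hBWtop := BW_tendsto_top hp hlam0 hlam1 hK
  have hBWbot := BW_tendsto_bot hp hlam0 hlam1 hK
  rw [← hcdef, ← hfcdef] at hBWtop hBWbot
  have hΨb : Tendsto Ψ (nhdsWithin b (Ioo a b)) (nhds (c + fc * (piP p / 2))) :=
    hBWtop.comp hwb
  have hΨa : Tendsto Ψ (nhdsWithin a (Ioo a b)) (nhds (-(c + fc * (piP p / 2)))) :=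
    hBWbot.comp hwa
  set Rtot := ∫ x in (0:ℝ)..piP p, max (r x) 0 with hRdef
  have step1 : ∀ β, β₀ ≤ β → β < b →
      Ψ β - fc * β - (-(c + fc * (piP p / 2)) - fc * a) + δ ≤ Rtot := by
    intro β hββ₀ hβb
    have hJa : Tendsto (fun α => Ψ β - fc * β - (Ψ α - fc * α) + δ)
        (nhdsWithin a (Ioo a b))
        (nhds (Ψ β - fc * β - (-(c + fc * (piP p / 2)) - fc * a) + δ)) := by
      apply Tendsto.add_const
      apply Tendsto.const_sub
      apply Tendsto.sub hΨa
      exact tendsto_const_nhds.mul (tendsto_id.mono_left nhdsWithin_le_nhds)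
    apply le_of_tendsto hJa
    have hevα : ∀ᶠ α in nhdsWithin a (Ioo a b), α ∈ Ioo a b ∧ α < α₀ := by
      apply Filter.Eventually.and self_mem_nhdsWithin
      exact nhdsWithin_le_nhds (Iio_mem_nhds hα₀mem.1)
    filter_upwards [hevα] with α ⟨hαmem, hαα₀⟩
    have := hEst α β hαmem.1 (le_of_lt hαα₀) hββ₀ hβb
    linarith
  have step2 : (c + fc * (piP p / 2)) - fc * b - (-(c + fc * (piP p / 2)) - fc * a) + δ
      ≤ Rtot := by
    have hJb : Tendsto (fun β => Ψ β - fc * β - (-(c + fc * (piP p / 2)) - fc * a) + δ)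
        (nhdsWithin b (Ioo a b))
        (nhds ((c + fc * (piP p / 2)) - fc * b - (-(c + fc * (piP p / 2)) - fc * a) + δ)) := by
      apply Tendsto.add_const
      apply Tendsto.sub_const
      apply Tendsto.sub hΨb
      exact tendsto_const_nhds.mul (tendsto_id.mono_left nhdsWithin_le_nhds)
    apply le_of_tendsto hJb
    have hevβ : ∀ᶠ β in nhdsWithin b (Ioo a b), β ∈ Ioo a b ∧ β₀ < β := by
      apply Filter.Eventually.and self_mem_nhdsWithin
      exact nhdsWithin_le_nhds (Ioi_mem_nhds hβ₀mem.2)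
    filter_upwards [hevβ] with β ⟨hβmem, hββ₀⟩
    exact step1 β (le_of_lt hββ₀) hβmem.2
  -- conclude
  have hba : b - a ≤ piP p := by linarith [ha0, hbπ]
  have hfcba : 0 ≤ fc * (piP p - (b - a)) := by
    apply mul_nonneg (le_of_lt hfc0)
    linarith
  have hexp : fc * (piP p - (b - a)) =
      fc * (piP p / 2) + fc * (piP p / 2) - fc * b + fc * a := by ring
  linarith [step2, hδpos, hfcba, hexp]
end core

/-- Lyapunov-type inequality for `0 < λ < p - 1`: if the BVP
`(|u'|^(p-2)u')' + (λ + r)|u|^(p-2)u = 0`, `u(0) = u(π_p) = 0` has a nontrivial solution,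
then `∫₀^{π_p} r₊ > 2 K^(p-1) (cot_p (K π_p / 2))^(p-1)` where `K = (λ/(p-1))^(1/p)`. -/
theorem lyapunov_pos_lambda (p lam K : ℝ) (hp : 1 < p)
    (hlam0 : 0 < lam) (hlam1 : lam < p - 1)
    (hK : K = (lam / (p - 1)) ^ (1 / p))
    (r u u' : ℝ → ℝ) (hr : ContinuousOn r (Set.Icc 0 (piP p)))
    (hsol : IsNontrivialSolution p lam r u u') :
    (∫ x in (0:ℝ)..piP p, max (r x) 0) >
      2 * K ^ (p - 1) * (cotP p (K * piP p / 2)) ^ (p - 1) := by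
  obtain ⟨⟨x₀, hx₀mem, hx₀ne⟩, hu'cont, hderiv, hu0, huπ, hODE⟩ := hsol
  have hπ : 0 < piP p := piP_pos hp
  have hx₀Ioo : x₀ ∈ Ioo 0 (piP p) := by
    constructor
    · rcases eq_or_lt_of_le hx₀mem.1 with h | h
      · exact absurd (by rw [← h]; exact hu0) hx₀ne
      · exact h
    · rcases eq_or_lt_of_le hx₀mem.2 with h | h
      · exact absurd (by rw [h]; exact huπ) hx₀ne
      · exact h
  rcases lt_or_gt_of_ne hx₀ne with hneg | hpos
  · -- apply the core estimate to -u
    have hODE' : ∀ x ∈ Ioo (0:ℝ) (piP p),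
        HasDerivAt (fun y => |(fun z => -u' z) y| ^ (p - 2) * (fun z => -u' z) y)
          (-((lam + r x) * |(fun z => -u z) x| ^ (p - 2) * (fun z => -u z) x)) x := by
      intro x hx
      have h1 := (hODE x hx).neg
      have h2 : HasDerivAt (fun y => |(-u' y)| ^ (p - 2) * (-u' y))
          (-(-((lam + r x) * |u x| ^ (p - 2) * u x))) x := by
        apply h1.congr_of_eventuallyEq
        filter_upwards with y
        rw [abs_neg, Pi.neg_apply]; ring
      have h3 : -(-((lam + r x) * |u x| ^ (p - 2) * u x)) =
          -((lam + r x) * |(-u x)| ^ (p - 2) * (-u x)) := by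
        rw [abs_neg]; ring
      rw [h3] at h2
      exact h2
    have := core_estimate (u := fun z => -u z) (u' := fun z => -u' z)
      hp hlam0 hlam1 hK hr hu'cont.neg
      (fun x hx => (hderiv x hx).neg)
      (by simp [hu0]) (by simp [huπ]) hODE' hx₀Ioo (by simpa using hneg)
    exact this
  · exact core_estimate hp hlam0 hlam1 hK hr hu'cont hderiv hu0 huπ hODE hx₀Ioo hpos
end

section
/- Let 1 < p < ∞. For every z ∈ [0,π_p], ∫₀^z |cos_p(t)|^p dt = (1/p)·((p−1)·z + |cos_p(z)|^{p−2}·cos_p(z)·sin_p(z)). -/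
open Set MeasureTheory intervalIntegral Function

namespace PTrig

variable {p : ℝ}

noncomputable def g (p t : ℝ) : ℝ := (1 - t ^ p) ^ (-(1 / p))

lemma g_meas : Measurable (g p) := by
  unfold g; measurability

lemma g_pos (hp : 1 < p) {t : ℝ} (ht : t ∈ Ico (0:ℝ) 1) : 0 < g p t := by
  apply Real.rpow_pos_of_pos
  have : t ^ p < 1 := Real.rpow_lt_one ht.1 ht.2 (by linarith)
  linarith

lemma g_contAt (hp : 1 < p) {t : ℝ} (ht : t ∈ Ico (0:ℝ) 1) : ContinuousAt (g p) t := by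
  have h1 : ContinuousAt (fun t : ℝ => 1 - t ^ p) t := by
    apply continuousAt_const.sub
    apply Real.continuousAt_rpow_const _ _ (Or.inr (by linarith))
  apply ContinuousAt.rpow_const h1
  left
  have : t ^ p < 1 := Real.rpow_lt_one ht.1 ht.2 (by linarith)
  linarith

lemma g_intInt (hp : 1 < p) : IntervalIntegrable (g p) volume 0 1 := by
  have hbig : IntervalIntegrable (fun t : ℝ => (1 - t) ^ (-(1/p))) volume 0 1 := by
    have h0 : IntervalIntegrable (fun x : ℝ => x ^ (-(1/p))) volume 0 1 := by
      apply intervalIntegral.intervalIntegrable_rpow'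
      have : 1/p < 1 := by
        rw [div_lt_one (by linarith)]; linarith
      linarith
    have := (h0.comp_sub_left 1).symm
    simpa using this
  apply hbig.mono_fun' (g_meas.aestronglyMeasurable)
  rw [Filter.EventuallyLE, ae_restrict_iff' measurableSet_uIoc]
  filter_upwards with t ht
  rw [uIoc_of_le (by norm_num : (0:ℝ) ≤ 1)] at ht
  have ht0 : 0 < t := ht.1
  have ht1 : t ≤ 1 := ht.2
  have htp : t ^ p ≤ t := by
    calc t ^ p ≤ t ^ (1:ℝ) := Real.rpow_le_rpow_of_exponent_ge ht0 ht1 (by linarith)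
    _ = t := Real.rpow_one t
  have h1 : (0:ℝ) ≤ 1 - t ^ p := by
    have : t ^ p ≤ 1 := le_trans htp ht1
    linarith
  have hnorm : ‖g p t‖ = g p t := Real.norm_of_nonneg (Real.rpow_nonneg h1 _)
  rw [hnorm]
  rcases eq_or_lt_of_le ht1 with h | h
  · subst h
    simp only [g, Real.one_rpow, sub_self]
    exact le_refl _
  · have h2 : (0:ℝ) < 1 - t := by linarith
    have h3 : 1 - t ≤ 1 - t ^ p := by linarith
    have hexp : -(1/p) ≤ 0 := by
      have : 0 < 1/p := by positivity
      linarith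
    exact Real.antitoneOn_rpow_Ioi_of_exponent_nonpos hexp
      (mem_Ioi.2 h2) (mem_Ioi.2 (lt_of_lt_of_le h2 h3)) h3

lemma g_intInt' (hp : 1 < p) {a b : ℝ} (ha : a ∈ Icc (0:ℝ) 1) (hb : b ∈ Icc (0:ℝ) 1) :
    IntervalIntegrable (g p) volume a b := by
  apply (g_intInt hp).mono_set'
  rw [uIoc_of_le (by norm_num : (0:ℝ) ≤ 1)]
  intro t htm
  rcases le_or_gt a b with h | h
  · rw [uIoc_of_le h] at htm
    exact ⟨lt_of_le_of_lt ha.1 htm.1, le_trans htm.2 hb.2⟩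
  · rw [uIoc_of_ge h.le] at htm
    exact ⟨lt_of_le_of_lt hb.1 htm.1, le_trans htm.2 ha.2⟩

lemma arcsinP_eq_integral (x : ℝ) : arcsinP p x = ∫ t in (0:ℝ)..x, g p t := rfl

lemma arcsinP_zero : arcsinP p 0 = 0 := intervalIntegral.integral_same

lemma arcsinP_strictMonoOn (hp : 1 < p) : StrictMonoOn (arcsinP p) (Icc 0 1) := by
  intro x hx y hy hxy
  have hint : IntervalIntegrable (g p) volume x y := g_intInt' hp hx hy
  have hadd : arcsinP p x + ∫ t in x..y, g p t = arcsinP p y :=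
    intervalIntegral.integral_add_adjacent_intervals
      (g_intInt' hp (by norm_num) hx) hint
  have hpos : 0 < ∫ t in x..y, g p t := by
    apply intervalIntegral.intervalIntegral_pos_of_pos_on hint
    · intro t ht
      exact g_pos hp ⟨le_trans hx.1 ht.1.le, lt_of_lt_of_le ht.2 hy.2⟩
    · exact hxy
  linarith

lemma arcsinP_continuousOn (hp : 1 < p) : ContinuousOn (arcsinP p) (Icc 0 1) := by
  have h : IntegrableOn (g p) (uIcc 0 1) volume := by
    rw [uIcc_of_le (by norm_num : (0:ℝ) ≤ 1)]
    exact (intervalIntegrable_iff_integrableOn_Icc_of_le (by norm_num)).mp (g_intInt hp)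
  have := intervalIntegral.continuousOn_primitive_interval h
  rwa [uIcc_of_le (by norm_num : (0:ℝ) ≤ 1)] at this

lemma arcsinP_one_pos (hp : 1 < p) : 0 < arcsinP p 1 := by
  have := arcsinP_strictMonoOn hp (by norm_num : (0:ℝ) ∈ Icc (0:ℝ) 1)
    (by norm_num : (1:ℝ) ∈ Icc (0:ℝ) 1) one_pos
  rwa [arcsinP_zero] at this

lemma arcsinP_image (hp : 1 < p) :
    arcsinP p '' Icc 0 1 = Icc 0 (arcsinP p 1) := by
  apply Subset.antisymm
  · rintro _ ⟨x, hx, rfl⟩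
    constructor
    · rw [← arcsinP_zero (p := p)]
      exact (arcsinP_strictMonoOn hp).monotoneOn (by norm_num) hx hx.1
    · exact (arcsinP_strictMonoOn hp).monotoneOn hx (by norm_num) hx.2
  · have := intermediate_value_Icc (by norm_num : (0:ℝ) ≤ 1) (arcsinP_continuousOn hp)
    rwa [arcsinP_zero] at this

lemma half_piP : piP p / 2 = arcsinP p 1 := by unfold piP; ring

lemma piP_pos (hp : 1 < p) : 0 < piP p := by
  have := arcsinP_one_pos hp; unfold piP; linarith

lemma half_pos (hp : 1 < p) : 0 < piP p / 2 := by rw [half_piP]; exact arcsinP_one_pos hp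

lemma sinPHalf_arcsinP (hp : 1 < p) {x : ℝ} (hx : x ∈ Icc (0:ℝ) 1) :
    sinPHalf p (arcsinP p x) = x :=
  ((arcsinP_strictMonoOn hp).injOn).leftInvOn_invFunOn hx

lemma sinPHalf_mem (hp : 1 < p) {y : ℝ} (hy : y ∈ Icc 0 (piP p / 2)) :
    sinPHalf p y ∈ Icc (0:ℝ) 1 := by
  rw [half_piP] at hy
  have : y ∈ arcsinP p '' Icc 0 1 := by rw [arcsinP_image hp]; exact hy
  obtain ⟨x, hx, rfl⟩ := this
  rw [sinPHalf_arcsinP hp hx]; exact hx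

lemma arcsinP_sinPHalf (hp : 1 < p) {y : ℝ} (hy : y ∈ Icc 0 (piP p / 2)) :
    arcsinP p (sinPHalf p y) = y := by
  rw [half_piP] at hy
  have : y ∈ arcsinP p '' Icc 0 1 := by rw [arcsinP_image hp]; exact hy
  obtain ⟨x, hx, rfl⟩ := this
  rw [sinPHalf_arcsinP hp hx]

lemma sinPHalf_zero (hp : 1 < p) : sinPHalf p 0 = 0 := by
  have := sinPHalf_arcsinP hp (by norm_num : (0:ℝ) ∈ Icc (0:ℝ) 1)
  rwa [arcsinP_zero] at this

lemma sinPHalf_half (hp : 1 < p) : sinPHalf p (piP p / 2) = 1 := by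
  rw [half_piP]
  exact sinPHalf_arcsinP hp (by norm_num : (1:ℝ) ∈ Icc (0:ℝ) 1)

lemma sinPHalf_strictMonoOn (hp : 1 < p) :
    StrictMonoOn (sinPHalf p) (Icc 0 (piP p / 2)) := by
  intro y1 h1 y2 h2 hlt
  by_contra hcon
  push_neg at hcon
  have := (arcsinP_strictMonoOn hp).monotoneOn (sinPHalf_mem hp h2) (sinPHalf_mem hp h1) hcon
  rw [arcsinP_sinPHalf hp h1, arcsinP_sinPHalf hp h2] at this
  exact absurd this (not_le.2 hlt)

lemma sinPHalf_continuousOn (hp : 1 < p) :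
    ContinuousOn (sinPHalf p) (Icc 0 (piP p / 2)) := by
  have hc0 : 0 < piP p / 2 := half_pos hp
  have hmono := sinPHalf_strictMonoOn hp
  have himg : sinPHalf p '' Icc 0 (piP p / 2) = Icc 0 1 := by
    apply Subset.antisymm
    · rintro _ ⟨y, hy, rfl⟩; exact sinPHalf_mem hp hy
    · intro x hx
      refine ⟨arcsinP p x, ?_, sinPHalf_arcsinP hp hx⟩
      rw [half_piP, ← arcsinP_image hp]
      exact mem_image_of_mem _ hx
  intro a ha
  have hR : a < piP p / 2 → ContinuousWithinAt (sinPHalf p) (Ici a) a := by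
    intro h
    apply StrictMonoOn.continuousWithinAt_right_of_image_mem_nhdsWithin hmono
    · exact Icc_mem_nhdsGE_of_mem ⟨ha.1, h⟩
    · rw [himg]
      have hfa1 : sinPHalf p a < 1 := by
        rw [← sinPHalf_half hp]
        exact hmono ha (right_mem_Icc.2 hc0.le) h
      exact Icc_mem_nhdsGE_of_mem ⟨(sinPHalf_mem hp ha).1, hfa1⟩
  have hL : 0 < a → ContinuousWithinAt (sinPHalf p) (Iic a) a := by
    intro h
    apply StrictMonoOn.continuousWithinAt_left_of_image_mem_nhdsWithin hmono
    · exact Icc_mem_nhdsLE_of_mem ⟨h, ha.2⟩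
    · rw [himg]
      have hfa0 : 0 < sinPHalf p a := by
        rw [← sinPHalf_zero hp]
        exact hmono (left_mem_Icc.2 hc0.le) ha h
      exact Icc_mem_nhdsLE_of_mem ⟨hfa0, (sinPHalf_mem hp ha).2⟩
  rcases eq_or_lt_of_le ha.1 with h0 | h0
  · exact (hR (by rw [← h0]; exact hc0)).mono fun x hx => by
      rw [mem_Ici, ← h0]; exact hx.1
  rcases eq_or_lt_of_le ha.2 with h1 | h1
  · exact (hL h0).mono fun x hx => by
      rw [mem_Iic, h1]; exact hx.2
  · exact ((hL h0).union (hR h1)).mono fun x _ => le_total x a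

lemma sinP_of_le {z : ℝ} (hz : z ≤ piP p / 2) : sinP p z = sinPHalf p z := if_pos hz

lemma sinP_zero (hp : 1 < p) : sinP p 0 = 0 := by
  rw [sinP_of_le (half_pos hp).le, sinPHalf_zero hp]

lemma sinP_half (hp : 1 < p) : sinP p (piP p / 2) = 1 := by
  rw [sinP_of_le (le_refl _), sinPHalf_half hp]

lemma sinP_mem (hp : 1 < p) {z : ℝ} (hz : z ∈ Icc 0 (piP p / 2)) :
    sinP p z ∈ Icc (0:ℝ) 1 := by
  rw [sinP_of_le hz.2]; exact sinPHalf_mem hp hz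

lemma sinP_lt_one (hp : 1 < p) {z : ℝ} (hz : z ∈ Ico 0 (piP p / 2)) :
    sinP p z < 1 := by
  rw [sinP_of_le hz.2.le, ← sinPHalf_half hp]
  exact sinPHalf_strictMonoOn hp ⟨hz.1, hz.2.le⟩ (right_mem_Icc.2 (half_pos hp).le) hz.2

lemma sinP_pos (hp : 1 < p) {z : ℝ} (hz : z ∈ Ioc 0 (piP p / 2)) :
    0 < sinP p z := by
  rw [sinP_of_le hz.2, ← sinPHalf_zero hp]
  exact sinPHalf_strictMonoOn hp (left_mem_Icc.2 (half_pos hp).le) ⟨hz.1.le, hz.2⟩ hz.1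

lemma one_sub_sinP_rpow_nonneg (hp : 1 < p) {z : ℝ} (hz : z ∈ Icc 0 (piP p / 2)) :
    0 ≤ 1 - sinP p z ^ p := by
  have h := sinP_mem hp hz
  have : sinP p z ^ p ≤ 1 := Real.rpow_le_one h.1 h.2 (by linarith)
  linarith

lemma one_sub_sinP_rpow_pos (hp : 1 < p) {z : ℝ} (hz : z ∈ Ico 0 (piP p / 2)) :
    0 < 1 - sinP p z ^ p := by
  have h := sinP_mem hp ⟨hz.1, hz.2.le⟩
  have : sinP p z ^ p < 1 := Real.rpow_lt_one h.1 (sinP_lt_one hp hz) (by linarith)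
  linarith

lemma cosP_of_le {z : ℝ} (hz : z ≤ piP p / 2) :
    cosP p z = (1 - sinP p z ^ p) ^ (1 / p) := if_pos hz

lemma cosP_nonneg (hp : 1 < p) {z : ℝ} (hz : z ∈ Icc 0 (piP p / 2)) : 0 ≤ cosP p z := by
  rw [cosP_of_le hz.2]
  exact Real.rpow_nonneg (one_sub_sinP_rpow_nonneg hp hz) _

lemma cosP_pos (hp : 1 < p) {z : ℝ} (hz : z ∈ Ico 0 (piP p / 2)) : 0 < cosP p z := by
  rw [cosP_of_le hz.2.le]
  exact Real.rpow_pos_of_pos (one_sub_sinP_rpow_pos hp hz) _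

lemma cosP_half (hp : 1 < p) : cosP p (piP p / 2) = 0 := by
  rw [cosP_of_le (le_refl _), sinP_half hp, Real.one_rpow, sub_self,
    Real.zero_rpow (by positivity)]

lemma cosP_rpow_p (hp : 1 < p) {z : ℝ} (hz : z ∈ Icc 0 (piP p / 2)) :
    cosP p z ^ p = 1 - sinP p z ^ p := by
  rw [cosP_of_le hz.2, ← Real.rpow_mul (one_sub_sinP_rpow_nonneg hp hz),
    one_div_mul_cancel (by positivity : p ≠ 0), Real.rpow_one]

lemma glue_continuousOn {f f1 f2 : ℝ → ℝ} {a b c : ℝ} (hab : a ≤ b) (hbc : b ≤ c)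
    (e1 : EqOn f f1 (Icc a b)) (e2 : EqOn f f2 (Icc b c))
    (h1 : ContinuousOn f1 (Icc a b)) (h2 : ContinuousOn f2 (Icc b c)) :
    ContinuousOn f (Icc a c) := by
  rw [← Icc_union_Icc_eq_Icc hab hbc]
  intro x hx
  apply ContinuousWithinAt.union
  · by_cases hm : x ∈ Icc a b
    · exact ((h1 x hm).congr e1 (e1 hm))
    · exact continuousWithinAt_of_notMem_closure (by rwa [isClosed_Icc.closure_eq])
  · by_cases hm : x ∈ Icc b c
    · exact ((h2 x hm).congr e2 (e2 hm))
    · exact continuousWithinAt_of_notMem_closure (by rwa [isClosed_Icc.closure_eq])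

lemma sinP_continuousOn (hp : 1 < p) : ContinuousOn (sinP p) (Icc 0 (piP p)) := by
  have hc0 := half_pos hp
  apply glue_continuousOn hc0.le (by linarith : piP p / 2 ≤ piP p)
    (f1 := sinPHalf p) (f2 := fun z => sinPHalf p (piP p - z))
  · intro x hx; exact sinP_of_le hx.2
  · intro x hx
    rcases eq_or_lt_of_le hx.1 with h | h
    · simp only [← h]
      rw [sinP_half hp]
      have h2 : piP p - piP p / 2 = piP p / 2 := by ring
      rw [h2, sinPHalf_half hp]
    · exact if_neg (not_le.2 h)
  · exact sinPHalf_continuousOn hp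
  · apply (sinPHalf_continuousOn hp).comp (continuous_const.sub continuous_id).continuousOn
    intro x hx
    exact ⟨by simp; linarith [hx.2], by simp; linarith [hx.1]⟩

lemma cosP_continuousOn (hp : 1 < p) : ContinuousOn (cosP p) (Icc 0 (piP p)) := by
  have hc0 := half_pos hp
  have hs := sinP_continuousOn hp
  have hbase : ContinuousOn (fun z => (1 - sinP p z ^ p) ^ (1/p)) (Icc 0 (piP p)) := by
    apply ContinuousOn.rpow_const
    · exact continuousOn_const.sub (hs.rpow_const fun x _ => Or.inr (by linarith))
    · intro x _; right; positivity
  apply glue_continuousOn hc0.le (by linarith : piP p / 2 ≤ piP p)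
    (f1 := fun z => (1 - sinP p z ^ p) ^ (1/p))
    (f2 := fun z => -((1 - sinP p z ^ p) ^ (1/p)))
  · intro x hx; exact cosP_of_le hx.2
  · intro x hx
    rcases eq_or_lt_of_le hx.1 with h | h
    · simp only [← h]
      rw [cosP_half hp, sinP_half hp, Real.one_rpow, sub_self,
        Real.zero_rpow (by positivity : (1/p) ≠ 0), neg_zero]
    · exact if_neg (not_le.2 h)
  · exact hbase.mono (Icc_subset_Icc (le_refl _) (by linarith))
  · exact (hbase.mono (Icc_subset_Icc hc0.le (le_refl _))).neg

lemma abs_cosP_rpow_continuousOn (hp : 1 < p) :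
    ContinuousOn (fun t => |cosP p t| ^ p) (Icc 0 (piP p)) :=
  ((cosP_continuousOn hp).abs).rpow_const fun x _ => Or.inr (by linarith)

lemma abs_cosP_rpow_intInt (hp : 1 < p) {a b : ℝ} (ha : a ∈ Icc 0 (piP p))
    (hb : b ∈ Icc 0 (piP p)) :
    IntervalIntegrable (fun t => |cosP p t| ^ p) volume a b := by
  apply ContinuousOn.intervalIntegrable
  apply (abs_cosP_rpow_continuousOn hp).mono
  exact uIcc_subset_Icc ha hb

lemma hasDerivAt_sinP (hp : 1 < p) {a : ℝ} (ha : a ∈ Ioo 0 (piP p / 2)) :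
    HasDerivAt (sinP p) (cosP p a) a := by
  have hc0 := half_pos hp
  set s := sinP p a with hs
  have hsmem : s ∈ Ioo (0:ℝ) 1 :=
    ⟨sinP_pos hp ⟨ha.1, ha.2.le⟩, sinP_lt_one hp ⟨ha.1.le, ha.2⟩⟩
  have harc : HasDerivAt (arcsinP p) (g p s) s := by
    apply intervalIntegral.integral_hasDerivAt_right
      (g_intInt' hp (by norm_num) ⟨hsmem.1.le, hsmem.2.le⟩)
    · exact ⟨univ, Filter.univ_mem, (g_meas.aestronglyMeasurable).restrict⟩
    · exact g_contAt hp ⟨hsmem.1.le, hsmem.2⟩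
  have hg0 : g p s ≠ 0 := (g_pos hp ⟨hsmem.1.le, hsmem.2⟩).ne'
  have hcontsin : ContinuousAt (sinP p) a := by
    apply (sinP_continuousOn hp).continuousAt (s := Icc 0 (piP p))
    exact Icc_mem_nhds ha.1 (by linarith [ha.2])
  have hfg : ∀ᶠ y in nhds a, arcsinP p (sinP p y) = y := by
    filter_upwards [Ioo_mem_nhds ha.1 ha.2] with y hy
    rw [sinP_of_le hy.2.le]
    exact arcsinP_sinPHalf hp ⟨hy.1.le, hy.2.le⟩
  have := HasDerivAt.of_local_left_inverse hcontsin harc hg0 hfg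
  have hinv : (g p s)⁻¹ = cosP p a := by
    rw [cosP_of_le ha.2.le]
    unfold g
    rw [Real.rpow_neg (by
      have := one_sub_sinP_rpow_pos hp ⟨ha.1.le, ha.2⟩
      linarith : (0:ℝ) ≤ 1 - s ^ p), inv_inv]
  rwa [hinv] at this

lemma hasDerivAt_integral (hp : 1 < p) {a : ℝ} (ha : a ∈ Ioo 0 (piP p)) :
    HasDerivAt (fun z => ∫ t in (0:ℝ)..z, |cosP p t| ^ p) (|cosP p a| ^ p) a := by
  apply intervalIntegral.integral_hasDerivAt_right
    (abs_cosP_rpow_intInt hp (by constructor <;> [norm_num; linarith [piP_pos hp]])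
      ⟨ha.1.le, ha.2.le⟩)
  · refine ⟨Icc 0 (piP p), Icc_mem_nhds ha.1 ha.2, ?_⟩
    exact (abs_cosP_rpow_continuousOn hp).aestronglyMeasurable measurableSet_Icc
  · exact ((abs_cosP_rpow_continuousOn hp).continuousAt (Icc_mem_nhds ha.1 ha.2))

lemma abs_cosP_mul (hp : 1 < p) {z : ℝ} (hz : z ∈ Ico 0 (piP p / 2)) :
    |cosP p z| ^ (p - 2) * cosP p z = (1 - sinP p z ^ p) ^ ((p - 1) / p) := by
  have hcpos : 0 < cosP p z := cosP_pos hp hz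
  rw [abs_of_pos hcpos]
  have h1 : cosP p z ^ (p - 2) * cosP p z = cosP p z ^ (p - 1) := by
    have := Real.rpow_add_one hcpos.ne' (p - 2)
    rw [show p - 2 + 1 = p - 1 by ring] at this
    rw [this]
  rw [h1, cosP_of_le hz.2.le, ← Real.rpow_mul (one_sub_sinP_rpow_nonneg hp ⟨hz.1, hz.2.le⟩)]
  congr 1
  field_simp

/-- the right-hand side function -/
noncomputable def R (p z : ℝ) : ℝ :=
  (1 / p) * ((p - 1) * z + |cosP p z| ^ (p - 2) * cosP p z * sinP p z)

lemma hasDerivAt_R (hp : 1 < p) {a : ℝ} (ha : a ∈ Ioo 0 (piP p / 2)) :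
    HasDerivAt (R p) (|cosP p a| ^ p) a := by
  have hc0 := half_pos hp
  set s := sinP p a with hs
  set u := 1 - sinP p a ^ p with hu
  set cs := cosP p a with hcs
  have hsmem : s ∈ Ioo (0:ℝ) 1 :=
    ⟨sinP_pos hp ⟨ha.1, ha.2.le⟩, sinP_lt_one hp ⟨ha.1.le, ha.2⟩⟩
  have hupos : 0 < u := one_sub_sinP_rpow_pos hp ⟨ha.1.le, ha.2⟩
  have hcpos : 0 < cs := cosP_pos hp ⟨ha.1.le, ha.2⟩
  have hds : HasDerivAt (sinP p) cs a := hasDerivAt_sinP hp ha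
  have h1 : HasDerivAt (fun z => sinP p z ^ p) (cs * p * s ^ (p - 1)) a :=
    hds.rpow_const (Or.inl hsmem.1.ne')
  have h2 : HasDerivAt (fun z => 1 - sinP p z ^ p) (-(cs * p * s ^ (p - 1))) a :=
    h1.const_sub 1
  have h3 : HasDerivAt (fun z => (1 - sinP p z ^ p) ^ ((p - 1) / p))
      (-(cs * p * s ^ (p - 1)) * ((p - 1) / p) * u ^ ((p - 1) / p - 1)) a :=
    h2.rpow_const (Or.inl hupos.ne')
  have h4 : HasDerivAt (fun z => (1 - sinP p z ^ p) ^ ((p - 1) / p) * sinP p z)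
      (-(cs * p * s ^ (p - 1)) * ((p - 1) / p) * u ^ ((p - 1) / p - 1) * s
        + u ^ ((p - 1) / p) * cs) a := h3.mul hds
  have h5 : HasDerivAt (fun z => (1 / p) * ((p - 1) * z +
      (1 - sinP p z ^ p) ^ ((p - 1) / p) * sinP p z))
      ((1 / p) * ((p - 1) * 1 +
        (-(cs * p * s ^ (p - 1)) * ((p - 1) / p) * u ^ ((p - 1) / p - 1) * s
          + u ^ ((p - 1) / p) * cs))) a :=
    (((hasDerivAt_id a).const_mul (p - 1)).add h4).const_mul (1 / p)
  have heq : R p =ᶠ[nhds a] fun z => (1 / p) * ((p - 1) * z +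
      (1 - sinP p z ^ p) ^ ((p - 1) / p) * sinP p z) := by
    filter_upwards [Ioo_mem_nhds ha.1 ha.2] with z hz
    unfold R
    rw [abs_cosP_mul hp ⟨hz.1.le, hz.2⟩]
  have hval : (1 / p) * ((p - 1) * 1 +
      (-(cs * p * s ^ (p - 1)) * ((p - 1) / p) * u ^ ((p - 1) / p - 1) * s
        + u ^ ((p - 1) / p) * cs)) = |cs| ^ p := by
    have hp0 : p ≠ 0 := by positivity
    have hA : u ^ ((p - 1) / p - 1) * cs = 1 := by
      rw [hcs, cosP_of_le ha.2.le, ← hu, ← Real.rpow_add hupos]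
      rw [show (p - 1) / p - 1 + 1 / p = 0 by field_simp; ring]
      exact Real.rpow_zero u
    have hB : u ^ ((p - 1) / p) * cs = u := by
      rw [hcs, cosP_of_le ha.2.le, ← hu, ← Real.rpow_add hupos]
      rw [show (p - 1) / p + 1 / p = 1 by field_simp; ring]
      exact Real.rpow_one u
    have hC : s ^ (p - 1) * s = s ^ p := by
      have := Real.rpow_add_one hsmem.1.ne' (p - 1)
      rw [show p - 1 + 1 = p by ring] at this
      rw [this]
    have habs : |cs| ^ p = u := by
      rw [abs_of_pos hcpos, hcs, cosP_rpow_p hp ⟨ha.1.le, ha.2.le⟩, ← hu]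
    rw [habs]
    have hterm : -(cs * p * s ^ (p - 1)) * ((p - 1) / p) * u ^ ((p - 1) / p - 1) * s
        = -((p - 1) * s ^ p) := by
      have : -(cs * p * s ^ (p - 1)) * ((p - 1) / p) * u ^ ((p - 1) / p - 1) * s
          = -(p * ((p - 1) / p)) * ((s ^ (p - 1) * s) * (u ^ ((p - 1) / p - 1) * cs)) := by
        ring
      rw [this, hC, hA, mul_one]
      field_simp
    rw [hterm, hB]
    have hsp : s ^ p = 1 - u := by rw [hu]; ring
    rw [hsp]
    field_simp
    ring
  exact (hval ▸ h5).congr_of_eventuallyEq heq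

noncomputable def R2 (p z : ℝ) : ℝ :=
  (1 / p) * ((p - 1) * z + (1 - sinP p z ^ p) ^ ((p - 1) / p) * sinP p z)

lemma R_eq_R2 (hp : 1 < p) {z : ℝ} (hz : z ∈ Ico 0 (piP p / 2)) : R p z = R2 p z := by
  unfold R R2
  rw [abs_cosP_mul hp hz]

lemma R2_continuousOn (hp : 1 < p) : ContinuousOn (R2 p) (Icc 0 (piP p / 2)) := by
  have hs : ContinuousOn (sinP p) (Icc 0 (piP p / 2)) :=
    (sinP_continuousOn hp).mono (Icc_subset_Icc (le_refl _) (by linarith [half_pos hp]))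
  apply ContinuousOn.mul continuousOn_const
  apply ContinuousOn.add (continuousOn_const.mul continuousOn_id)
  apply ContinuousOn.mul _ hs
  apply ContinuousOn.rpow_const
  · exact continuousOn_const.sub (hs.rpow_const fun x _ => Or.inr (by linarith))
  · intro x _; exact Or.inr (div_nonneg (by linarith) (by linarith))

lemma integral_continuousOn (hp : 1 < p) :
    ContinuousOn (fun z => ∫ t in (0:ℝ)..z, |cosP p t| ^ p) (Icc 0 (piP p)) := by
  have h : IntegrableOn (fun t => |cosP p t| ^ p) (uIcc 0 (piP p)) volume := by
    rw [uIcc_of_le (piP_pos hp).le]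
    exact (intervalIntegrable_iff_integrableOn_Icc_of_le (piP_pos hp).le).mp
      (abs_cosP_rpow_intInt hp ⟨le_refl _, (piP_pos hp).le⟩
        ⟨(piP_pos hp).le, le_refl _⟩)
  have := intervalIntegral.continuousOn_primitive_interval h
  rwa [uIcc_of_le (piP_pos hp).le] at this

lemma R_zero (hp : 1 < p) : R p 0 = 0 := by
  unfold R
  rw [sinP_zero hp]
  ring

lemma key_Ico (hp : 1 < p) {z : ℝ} (hz : z ∈ Ico 0 (piP p / 2)) :
    (∫ t in (0:ℝ)..z, |cosP p t| ^ p) = R p z := by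
  have hc0 := half_pos hp
  have hcpi : piP p / 2 < piP p := by linarith [piP_pos hp]
  set I := fun z => ∫ t in (0:ℝ)..z, |cosP p t| ^ p with hI
  set F := fun z => I z - R p z with hF
  rcases eq_or_lt_of_le hz.1 with h0 | h0
  · rw [← h0]
    show I 0 = R p 0
    rw [R_zero hp, hI]
    simp
  -- derivative of F is zero on Ioo 0 c
  have hFd : ∀ x ∈ Ioo 0 (piP p / 2), HasDerivAt F 0 x := by
    intro x hx
    have h1 := hasDerivAt_integral hp ⟨hx.1, lt_trans hx.2 hcpi⟩
    have h2 := hasDerivAt_R hp hx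
    have h3 := h1.sub h2; rw [sub_self] at h3; exact h3
  have hconst : ∀ ε, 0 < ε → ε ≤ z → F z = F ε := by
    intro ε hε hεz
    have hsub : Icc ε z ⊆ Ioo 0 (piP p / 2) := fun x hx => ⟨lt_of_lt_of_le hε hx.1,
      lt_of_le_of_lt hx.2 hz.2⟩
    apply constant_of_has_deriv_right_zero
      (f := F) (a := ε) (b := z)
      (fun x hx => ((hFd x (hsub hx)).continuousAt).continuousWithinAt)
      (fun x hx => ((hFd x (hsub ⟨hx.1, hx.2.le⟩)).hasDerivWithinAt))
    exact right_mem_Icc.2 hεz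
  -- limits
  have hIoc : Ioc 0 z ∈ nhdsWithin (0:ℝ) (Ioi 0) :=
    Ioc_mem_nhdsGT_of_mem ⟨le_refl _, h0⟩
  have htend2 : Filter.Tendsto F (nhdsWithin 0 (Ioi 0)) (nhds (F z)) := by
    apply Filter.Tendsto.congr' _ tendsto_const_nhds
    filter_upwards [hIoc] with ε hε
    exact hconst ε hε.1 hε.2
  have htend1 : Filter.Tendsto F (nhdsWithin 0 (Ioi 0)) (nhds (F 0)) := by
    apply ContinuousWithinAt.tendsto
    apply ContinuousWithinAt.sub
    · exact ((integral_continuousOn hp) 0 (left_mem_Icc.2 (piP_pos hp).le)).mono_of_mem_nhdsWithin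
        (Filter.mem_of_superset (Ioo_mem_nhdsGT_of_mem ⟨le_refl _, piP_pos hp⟩)
          (fun x hx => ⟨hx.1.le, hx.2.le⟩))
    · have hR2 : ContinuousWithinAt (R2 p) (Ioi 0) 0 :=
        ((R2_continuousOn hp) 0 (left_mem_Icc.2 hc0.le)).mono_of_mem_nhdsWithin
          (Filter.mem_of_superset (Ioo_mem_nhdsGT_of_mem ⟨le_refl _, hc0⟩)
            (fun x hx => ⟨hx.1.le, hx.2.le⟩))
      apply hR2.congr_of_eventuallyEq
      · filter_upwards [Ioo_mem_nhdsGT_of_mem (⟨le_refl _, hc0⟩ : (0:ℝ) ∈ Ico 0 (piP p / 2))]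
          with x hx
        exact R_eq_R2 hp ⟨hx.1.le, hx.2⟩
      · exact R_eq_R2 hp ⟨le_refl _, hc0⟩
  have hz0 : F z = F 0 := tendsto_nhds_unique htend2 htend1
  have hF0 : F 0 = 0 := by
    show I 0 - R p 0 = 0
    rw [R_zero hp, hI]
    simp
  have : F z = 0 := hz0.trans hF0
  rw [hF] at this
  have : I z - R p z = 0 := this
  linarith [this]

lemma R_half (hp : 1 < p) : R p (piP p / 2) = (1 / p) * ((p - 1) * (piP p / 2)) := by
  unfold R
  rw [cosP_half hp, mul_zero, zero_mul, add_zero]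

lemma key_Icc (hp : 1 < p) {z : ℝ} (hz : z ∈ Icc 0 (piP p / 2)) :
    (∫ t in (0:ℝ)..z, |cosP p t| ^ p) = R p z := by
  rcases eq_or_lt_of_le hz.2 with h | h
  swap
  · exact key_Ico hp ⟨hz.1, h⟩
  subst h
  have hc0 := half_pos hp
  have hcpi : piP p / 2 < piP p := by linarith [piP_pos hp]
  set c := piP p / 2 with hcdef
  set I := fun z => ∫ t in (0:ℝ)..z, |cosP p t| ^ p with hI
  set G := fun z => I z - R2 p z with hG
  have hGcwa : ContinuousWithinAt G (Iio c) c := by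
    apply ContinuousWithinAt.sub
    · exact ((integral_continuousOn hp) c ⟨hc0.le, hcpi.le⟩).mono_of_mem_nhdsWithin
        (nhdsWithin_mono c Iio_subset_Iic_self
          (Icc_mem_nhdsLE_of_mem ⟨hc0, hcpi.le⟩))
    · exact ((R2_continuousOn hp) c (right_mem_Icc.2 hc0.le)).mono_of_mem_nhdsWithin
        (nhdsWithin_mono c Iio_subset_Iic_self
          (Icc_mem_nhdsLE_of_mem ⟨hc0, le_refl c⟩))
  have htendG : Filter.Tendsto G (nhdsWithin c (Iio c)) (nhds (G c)) := hGcwa.tendsto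
  have htend0 : Filter.Tendsto G (nhdsWithin c (Iio c)) (nhds 0) := by
    apply Filter.Tendsto.congr' _ tendsto_const_nhds
    filter_upwards [Ico_mem_nhdsLT_of_mem (⟨hc0, le_refl c⟩ : c ∈ Ioc 0 c)] with x hx
    have h1 := key_Ico hp hx
    have h2 := R_eq_R2 hp hx
    show (0:ℝ) = I x - R2 p x
    rw [hI]
    simp only
    rw [h1, h2]
    ring
  have hGc : G c = 0 := tendsto_nhds_unique htendG htend0
  have hR2c : R2 p c = (1 / p) * ((p - 1) * c) := by
    unfold R2
    rw [sinP_half hp, Real.one_rpow, sub_self,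
      Real.zero_rpow (by
        have : 0 < (p-1)/p := div_pos (by linarith) (by linarith)
        linarith : (p-1)/p ≠ 0), zero_mul, add_zero]
  have : I c = R2 p c := by
    have : I c - R2 p c = 0 := hGc
    linarith
  rw [show (∫ t in (0:ℝ)..c, |cosP p t| ^ p) = I c from rfl, this, hR2c, R_half hp]

lemma sinP_reflect (hp : 1 < p) {z : ℝ} (hz : piP p / 2 ≤ z) :
    sinP p z = sinP p (piP p - z) := by
  have hle : piP p - z ≤ piP p / 2 := by linarith
  rw [sinP_of_le hle]
  rcases eq_or_lt_of_le hz with h | h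
  · rw [← h, sinP_half hp, show piP p - piP p / 2 = piP p / 2 by ring, sinPHalf_half hp]
  · rw [sinP, if_neg (not_le.2 h)]

lemma cosP_reflect (hp : 1 < p) {z : ℝ} (hz : piP p / 2 ≤ z) :
    cosP p z = -cosP p (piP p - z) := by
  have hle : piP p - z ≤ piP p / 2 := by linarith
  rw [cosP_of_le hle, ← sinP_reflect hp hz]
  rcases eq_or_lt_of_le hz with h | h
  · rw [← h, cosP_half hp, sinP_half hp, Real.one_rpow, sub_self,
      Real.zero_rpow (by positivity : (1/p) ≠ 0), neg_zero]
  · rw [cosP, if_neg (not_le.2 h)]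

end PTrig

/-- `∫₀^z |cos_p t|^p dt = (1/p)((p-1) z + |cos_p z|^(p-2) cos_p z · sin_p z)` for
`z ∈ [0, π_p]`. -/
theorem integral_abs_cosP_rpow (p : ℝ) (hp : 1 < p) (z : ℝ) (hz : z ∈ Set.Icc 0 (piP p)) :
    (∫ t in (0:ℝ)..z, |cosP p t| ^ p) =
      (1 / p) * ((p - 1) * z + |cosP p z| ^ (p - 2) * cosP p z * sinP p z) := by
  obtain ⟨hz0, hzpi⟩ := hz
  rcases le_or_gt z (piP p / 2) with h | h
  · exact PTrig.key_Icc hp ⟨hz0, h⟩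
  · have hc0 := PTrig.half_pos hp
    have hw : piP p - z ∈ Set.Ico 0 (piP p / 2) := ⟨by linarith, by linarith⟩
    have hIw := PTrig.key_Ico hp hw
    have hIc := PTrig.key_Icc hp (Set.right_mem_Icc.2 hc0.le)
    rw [PTrig.R_half hp] at hIc
    have hintA := PTrig.abs_cosP_rpow_intInt hp
      (⟨le_refl _, (PTrig.piP_pos hp).le⟩ : (0:ℝ) ∈ Set.Icc 0 (piP p))
      (⟨hc0.le, by linarith [PTrig.piP_pos hp]⟩ : piP p / 2 ∈ Set.Icc 0 (piP p))
    have hintB := PTrig.abs_cosP_rpow_intInt hp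
      (⟨hc0.le, by linarith [PTrig.piP_pos hp]⟩ : piP p / 2 ∈ Set.Icc 0 (piP p))
      (⟨hz0, hzpi⟩ : z ∈ Set.Icc 0 (piP p))
    have hintC := PTrig.abs_cosP_rpow_intInt hp
      (⟨le_refl _, (PTrig.piP_pos hp).le⟩ : (0:ℝ) ∈ Set.Icc 0 (piP p))
      (⟨hw.1, by linarith [PTrig.piP_pos hp]⟩ : piP p - z ∈ Set.Icc 0 (piP p))
    have hintD := PTrig.abs_cosP_rpow_intInt hp
      (⟨hw.1, by linarith [PTrig.piP_pos hp]⟩ : piP p - z ∈ Set.Icc 0 (piP p))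
      (⟨hc0.le, by linarith [PTrig.piP_pos hp]⟩ : piP p / 2 ∈ Set.Icc 0 (piP p))
    have hA : (∫ t in (0:ℝ)..(piP p / 2), |cosP p t| ^ p)
        + (∫ t in (piP p / 2)..z, |cosP p t| ^ p)
        = ∫ t in (0:ℝ)..z, |cosP p t| ^ p :=
      intervalIntegral.integral_add_adjacent_intervals hintA hintB
    have hB : (∫ t in (0:ℝ)..(piP p - z), |cosP p t| ^ p)
        + (∫ t in (piP p - z)..(piP p / 2), |cosP p t| ^ p)
        = ∫ t in (0:ℝ)..(piP p / 2), |cosP p t| ^ p :=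
      intervalIntegral.integral_add_adjacent_intervals hintC hintD
    have hcongr : (∫ t in (piP p / 2)..z, |cosP p t| ^ p)
        = ∫ t in (piP p / 2)..z, |cosP p (piP p - t)| ^ p := by
      apply intervalIntegral.integral_congr
      intro t ht
      rw [Set.uIcc_of_le h.le] at ht
      simp only
      rw [PTrig.cosP_reflect hp ht.1, abs_neg]
    have hsub : (∫ t in (piP p / 2)..z, |cosP p (piP p - t)| ^ p)
        = ∫ t in (piP p - z)..(piP p - piP p / 2), |cosP p t| ^ p :=
      intervalIntegral.integral_comp_sub_left (fun t => |cosP p t| ^ p) (piP p)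
    rw [show piP p - piP p / 2 = piP p / 2 by ring] at hsub
    -- rewrite goal using reflection
    rw [PTrig.cosP_reflect hp h.le, PTrig.sinP_reflect hp h.le, abs_neg]
    unfold PTrig.R at hIw
    have hp0 : p ≠ 0 := by positivity
    have hfinal : (∫ t in (0:ℝ)..z, |cosP p t| ^ p)
        = 2 * ((1 / p) * ((p - 1) * (piP p / 2)))
          - ((1 / p) * ((p - 1) * (piP p - z)
            + |cosP p (piP p - z)| ^ (p - 2) * cosP p (piP p - z) * sinP p (piP p - z))) := by
      rw [← hIc, ← hIw]
      rw [← hA, hcongr, hsub, ← hB]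
      ring
    rw [hfinal]
    field_simp
    ring
end

section
/- Let 1 < p < ∞. For every z ≥ 0, ∫₀^z (cosh_p(t))^p dt = (1/p)·((p−1)·z + (cosh_p(z))^{p−1}·sinh_p(z)). -/
/-- `arcsinh_p x = ∫₀ˣ (1 + tᵖ)^(-1/p) dt`. -/
noncomputable def arcsinhP (p x : ℝ) : ℝ := ∫ t in (0:ℝ)..x, (1 + t ^ p) ^ (-(1 / p))

/-- `sinh_p : [0,∞) → [0,∞)`, defined as the inverse of `arcsinh_p` on `[0,∞)`. -/
noncomputable def sinhP (p : ℝ) : ℝ → ℝ := Function.invFunOn (arcsinhP p) (Set.Ici 0)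

/-- `cosh_p x = (1 + sinh_p x ^ p)^(1/p)`. -/
noncomputable def coshP (p x : ℝ) : ℝ := (1 + sinhP p x ^ p) ^ (1 / p)

/-- `coth_p x = cosh_p x / sinh_p x`. -/
noncomputable def cothP (p x : ℝ) : ℝ := coshP p x / sinhP p x

open Set intervalIntegral Real

variable {p : ℝ}

lemma gpos (hp : 1 < p) {t : ℝ} (ht : 0 ≤ t) : 0 < (1 + t ^ p) ^ (-(1 / p)) := by
  have : (0:ℝ) < 1 + t ^ p := by nlinarith [Real.rpow_nonneg ht p]
  exact Real.rpow_pos_of_pos this _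

lemma gle1 (hp : 1 < p) {t : ℝ} (ht : 0 ≤ t) : (1 + t ^ p) ^ (-(1 / p)) ≤ 1 := by
  have h1 : (1:ℝ) ≤ 1 + t ^ p := by nlinarith [Real.rpow_nonneg ht p]
  exact Real.rpow_le_one_of_one_le_of_nonpos h1 (by simp; positivity)

lemma gcont (hp : 1 < p) : ContinuousOn (fun t : ℝ => (1 + t ^ p) ^ (-(1 / p))) (Ici 0) := by
  have h1 : ContinuousOn (fun t : ℝ => 1 + t ^ p) (Ici 0) :=
    continuousOn_const.add (continuousOn_id.rpow_const fun x _ => Or.inr (by linarith))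
  exact h1.rpow_const fun x hx => Or.inl (by nlinarith [Real.rpow_nonneg (hx : (0:ℝ) ≤ x) p])

lemma gint (hp : 1 < p) {a b : ℝ} (ha : 0 ≤ a) (hb : 0 ≤ b) :
    IntervalIntegrable (fun t : ℝ => (1 + t ^ p) ^ (-(1 / p))) MeasureTheory.volume a b := by
  apply ((gcont hp).mono ?_).intervalIntegrable
  intro x hx
  have := hx.1
  simp only [mem_Ici]
  exact le_trans (le_min ha hb) this

lemma arcsinhP_zero : arcsinhP p 0 = 0 := intervalIntegral.integral_same

lemma arcsinhP_sub (hp : 1 < p) {a b : ℝ} (ha : 0 ≤ a) (hb : 0 ≤ b) :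
    arcsinhP p b - arcsinhP p a = ∫ t in a..b, (1 + t ^ p) ^ (-(1 / p)) := by
  unfold arcsinhP
  rw [intervalIntegral.integral_interval_sub_left (gint hp (le_refl 0) hb) (gint hp (le_refl 0) ha)]

lemma arcsinhP_strictMonoOn (hp : 1 < p) : StrictMonoOn (arcsinhP p) (Ici 0) := by
  intro a ha b hb hab
  have h := arcsinhP_sub hp (ha : (0:ℝ) ≤ a) hb
  have hpos : 0 < ∫ t in a..b, (1 + t ^ p) ^ (-(1 / p)) := by
    apply intervalIntegral.intervalIntegral_pos_of_pos_on
      (gint hp (le_trans ha (le_refl a)) (le_trans ha hab.le))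
    · intro x hx
      exact gpos hp (le_trans ha hx.1.le)
    · exact hab
  linarith

lemma arcsinhP_nonneg (hp : 1 < p) {x : ℝ} (hx : 0 ≤ x) : 0 ≤ arcsinhP p x := by
  rcases eq_or_lt_of_le hx with h | h
  · rw [← h, arcsinhP_zero]
  · have := arcsinhP_strictMonoOn hp (self_mem_Ici) hx h
    rw [arcsinhP_zero] at this; exact this.le

lemma arcsinhP_lipschitz (hp : 1 < p) {a b : ℝ} (ha : 0 ≤ a) (hab : a ≤ b) :
    arcsinhP p b - arcsinhP p a ≤ b - a := by
  rw [arcsinhP_sub hp ha (ha.trans hab)]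
  calc (∫ t in a..b, (1 + t ^ p) ^ (-(1 / p))) ≤ ∫ _ in a..b, (1:ℝ) := by
          apply intervalIntegral.integral_mono_on hab (gint hp ha (ha.trans hab))
            intervalIntegrable_const
          intro x hx
          exact gle1 hp (ha.trans hx.1)
    _ = b - a := by simp

lemma arcsinhP_continuousOn (hp : 1 < p) : ContinuousOn (arcsinhP p) (Ici 0) := by
  have : LipschitzOnWith 1 (arcsinhP p) (Ici 0) := by
    rw [lipschitzOnWith_iff_dist_le_mul]
    intro x hx y hy
    simp only [NNReal.coe_one, one_mul, Real.dist_eq]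
    rcases le_total x y with h | h
    · have h1 := arcsinhP_lipschitz hp (hy : (0:ℝ) ≤ y) (le_refl y)
      have h2 := arcsinhP_lipschitz hp (hx : (0:ℝ) ≤ x) h
      have h3 : arcsinhP p x ≤ arcsinhP p y := by
        rcases eq_or_lt_of_le h with h' | h'
        · rw [h']
        · exact (arcsinhP_strictMonoOn hp hx hy h').le
      rw [abs_of_nonpos (by linarith), abs_of_nonpos (by linarith)]
      linarith
    · have h2 := arcsinhP_lipschitz hp (hy : (0:ℝ) ≤ y) h
      have h3 : arcsinhP p y ≤ arcsinhP p x := by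
        rcases eq_or_lt_of_le h with h' | h'
        · rw [h']
        · exact (arcsinhP_strictMonoOn hp hy hx h').le
      rw [abs_of_nonneg (by linarith), abs_of_nonneg (by linarith)]
      linarith
  exact this.continuousOn

lemma arcsinhP_hasDerivAt (hp : 1 < p) {x : ℝ} (hx : 0 < x) :
    HasDerivAt (arcsinhP p) ((1 + x ^ p) ^ (-(1 / p))) x := by
  have hopen : IsOpen (Ioi (0:ℝ)) := isOpen_Ioi
  have hconIoi : ContinuousOn (fun t : ℝ => (1 + t ^ p) ^ (-(1 / p))) (Ioi 0) :=
    (gcont hp).mono Ioi_subset_Ici_self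
  have hca : ContinuousAt (fun t : ℝ => (1 + t ^ p) ^ (-(1 / p))) x :=
    hconIoi.continuousAt (hopen.mem_nhds hx)
  exact intervalIntegral.integral_hasDerivAt_right (gint hp le_rfl hx.le)
    ⟨Ioi 0, hopen.mem_nhds hx, hconIoi.aestronglyMeasurable hopen.measurableSet⟩ hca

lemma g_lower (hp : 1 < p) {t : ℝ} (ht : 1 ≤ t) : (2 * t)⁻¹ ≤ (1 + t ^ p) ^ (-(1 / p)) := by
  have ht0 : (0:ℝ) < t := lt_of_lt_of_le one_pos ht
  have htp1 : (1:ℝ) ≤ t ^ p := by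
    calc (1:ℝ) = 1 ^ p := (Real.one_rpow p).symm
    _ ≤ t ^ p := Real.rpow_le_rpow zero_le_one ht (by linarith)
  have h2p : (2:ℝ) ≤ 2 ^ p := by
    calc (2:ℝ) = 2 ^ (1:ℝ) := (Real.rpow_one 2).symm
    _ ≤ 2 ^ p := Real.rpow_le_rpow_of_exponent_le one_le_two hp.le
  have key : 1 + t ^ p ≤ (2 * t) ^ p := by
    rw [Real.mul_rpow (by norm_num) ht0.le]
    nlinarith
  have hbase : (0:ℝ) < 1 + t ^ p := by linarith
  have h1 : (1 + t ^ p) ^ (1 / p) ≤ 2 * t := by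
    calc (1 + t ^ p) ^ (1 / p) ≤ ((2 * t) ^ p) ^ (1 / p) :=
          Real.rpow_le_rpow hbase.le key (by positivity)
    _ = 2 * t := by
          rw [one_div, Real.rpow_rpow_inv (by positivity) (by linarith)]
  rw [Real.rpow_neg hbase.le, one_div]
  rw [← Real.rpow_rpow_inv (show (0:ℝ) ≤ 2 * t by positivity) (show p ≠ 0 by linarith)] at h1 ⊢
  apply inv_anti₀
  · positivity
  · rwa [one_div] at h1

lemma arcsinhP_unbounded (hp : 1 < p) (y : ℝ) (hy : 0 ≤ y) :
    ∃ b, 0 ≤ b ∧ y ≤ arcsinhP p b := by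
  set b := max 1 (Real.exp (2 * y)) with hb
  have hb1 : (1:ℝ) ≤ b := le_max_left _ _
  have hb0 : (0:ℝ) < b := lt_of_lt_of_le one_pos hb1
  refine ⟨b, by linarith, ?_⟩
  have hsplit : arcsinhP p b - arcsinhP p 1 = ∫ t in (1:ℝ)..b, (1 + t ^ p) ^ (-(1 / p)) :=
    arcsinhP_sub hp zero_le_one hb0.le
  have h1 : (∫ t in (1:ℝ)..b, (2 * t)⁻¹) ≤ ∫ t in (1:ℝ)..b, (1 + t ^ p) ^ (-(1 / p)) := by
    apply intervalIntegral.integral_mono_on hb1 ?_ (gint hp zero_le_one hb0.le)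
    · intro x hx
      exact g_lower hp hx.1
    · apply ContinuousOn.intervalIntegrable
      apply ContinuousOn.inv₀
      · fun_prop
      · intro x hx
        have : (1:ℝ) ≤ x := by
          rcases hx with ⟨h1', h2'⟩
          simpa [min_eq_left hb1] using h1'
        positivity
  have h2 : (∫ t in (1:ℝ)..b, (2 * t)⁻¹) = (1/2) * Real.log b := by
    have : ∀ t : ℝ, (2 * t)⁻¹ = (1/2) * t⁻¹ := by intro t; rw [mul_inv]; ring
    simp_rw [this]
    rw [intervalIntegral.integral_const_mul, integral_inv_of_pos one_pos hb0]
    simp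
  have h3 : 2 * y ≤ Real.log b := by
    rw [Real.le_log_iff_exp_le hb0]
    exact le_max_right _ _
  have h4 : 0 ≤ arcsinhP p 1 := arcsinhP_nonneg hp zero_le_one
  linarith [hsplit, h1, h2 ▸ h1]

lemma arcsinhP_surjOn (hp : 1 < p) : SurjOn (arcsinhP p) (Ici 0) (Ici 0) := by
  intro y hy
  obtain ⟨b, hb0, hby⟩ := arcsinhP_unbounded hp y hy
  have hIcc : ContinuousOn (arcsinhP p) (Icc 0 b) :=
    (arcsinhP_continuousOn hp).mono Icc_subset_Ici_self
  have := intermediate_value_Icc hb0 hIcc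
  have hmem : y ∈ Icc (arcsinhP p 0) (arcsinhP p b) := by
    rw [arcsinhP_zero]
    exact ⟨hy, hby⟩
  obtain ⟨x, hx, hxy⟩ := this hmem
  exact ⟨x, hx.1, hxy⟩

lemma sinhP_mem (hp : 1 < p) {y : ℝ} (hy : 0 ≤ y) : 0 ≤ sinhP p y :=
  Function.invFunOn_mem (by exact (arcsinhP_surjOn hp) hy)

lemma arcsinhP_sinhP (hp : 1 < p) {y : ℝ} (hy : 0 ≤ y) : arcsinhP p (sinhP p y) = y :=
  Function.invFunOn_eq (by exact (arcsinhP_surjOn hp) hy)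

lemma sinhP_arcsinhP (hp : 1 < p) {x : ℝ} (hx : 0 ≤ x) : sinhP p (arcsinhP p x) = x :=
  ((arcsinhP_strictMonoOn hp).injOn).leftInvOn_invFunOn hx

lemma sinhP_zero (hp : 1 < p) : sinhP p 0 = 0 := by
  have := sinhP_arcsinhP hp (le_refl (0:ℝ))
  rwa [arcsinhP_zero] at this

lemma sinhP_pos (hp : 1 < p) {y : ℝ} (hy : 0 < y) : 0 < sinhP p y := by
  rcases eq_or_lt_of_le (sinhP_mem hp hy.le) with h | h
  · exfalso
    have := arcsinhP_sinhP hp hy.le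
    rw [← h, arcsinhP_zero] at this
    linarith
  · exact h

lemma sinhP_strictMonoOn (hp : 1 < p) : StrictMonoOn (sinhP p) (Ici 0) := by
  intro a ha b hb hab
  by_contra h
  push_neg at h
  have h1 : arcsinhP p (sinhP p b) ≤ arcsinhP p (sinhP p a) := by
    rcases eq_or_lt_of_le h with h' | h'
    · rw [h']
    · exact (arcsinhP_strictMonoOn hp (sinhP_mem hp hb) (sinhP_mem hp ha) h').le
  rw [arcsinhP_sinhP hp ha, arcsinhP_sinhP hp hb] at h1
  exact absurd hab (not_lt.2 h1)

lemma sinhP_surjOn (hp : 1 < p) : SurjOn (sinhP p) (Ici 0) (Ici 0) := by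
  intro x hx
  exact ⟨arcsinhP p x, arcsinhP_nonneg hp hx, sinhP_arcsinhP hp hx⟩

lemma sinhP_continuousAt (hp : 1 < p) {y : ℝ} (hy : 0 < y) : ContinuousAt (sinhP p) y := by
  apply (sinhP_strictMonoOn hp).continuousAt_of_exists_between
    (Filter.mem_of_superset (Ioi_mem_nhds hy) Ioi_subset_Ici_self)
  · intro b hb
    rcases lt_or_ge b 0 with h | h
    · exact ⟨0, self_mem_Ici, by rw [sinhP_zero hp]; exact ⟨h.le, sinhP_pos hp hy⟩⟩
    · obtain ⟨c, hc, hcb⟩ := sinhP_surjOn hp (h : b ∈ Ici (0:ℝ))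
      exact ⟨c, hc, by rw [hcb]; exact ⟨le_refl b, hb⟩⟩
  · intro b hb
    have hb0 : (0:ℝ) ≤ b := le_trans (sinhP_mem hp hy.le) hb.le
    obtain ⟨c, hc, hcb⟩ := sinhP_surjOn hp (hb0 : b ∈ Ici (0:ℝ))
    exact ⟨c, hc, by rw [hcb]; exact ⟨hb, le_refl b⟩⟩

lemma sinhP_continuousOn (hp : 1 < p) : ContinuousOn (sinhP p) (Ici 0) := by
  intro a ha
  rcases eq_or_lt_of_le (mem_Ici.mp ha) with h | h
  · rw [← h]
    have h1 : ContinuousWithinAt (sinhP p) (Ici 0) 0 := by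
      apply (sinhP_strictMonoOn hp).continuousWithinAt_right_of_surjOn self_mem_nhdsWithin
      apply (sinhP_surjOn hp).mono subset_rfl
      rw [sinhP_zero hp]
      exact Ioi_subset_Ici_self
    exact h1
  · exact (sinhP_continuousAt hp h).continuousWithinAt

lemma sinhP_hasDerivAt (hp : 1 < p) {y : ℝ} (hy : 0 < y) :
    HasDerivAt (sinhP p) (coshP p y) y := by
  have hs : 0 < sinhP p y := sinhP_pos hp hy
  have hf : HasDerivAt (arcsinhP p) ((1 + (sinhP p y) ^ p) ^ (-(1 / p))) (sinhP p y) :=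
    arcsinhP_hasDerivAt hp hs
  have hbase : (0:ℝ) < 1 + (sinhP p y) ^ p := by
    nlinarith [Real.rpow_nonneg hs.le p]
  have hne : (1 + (sinhP p y) ^ p) ^ (-(1 / p)) ≠ 0 := (gpos hp hs.le).ne'
  have hfg : ∀ᶠ z in nhds y, arcsinhP p (sinhP p z) = z := by
    filter_upwards [Ioi_mem_nhds hy] with z hz
    exact arcsinhP_sinhP hp (le_of_lt hz)
  have := HasDerivAt.of_local_left_inverse (sinhP_continuousAt hp hy) hf hne hfg
  refine this.congr_deriv ?_
  symm
  rw [Real.rpow_neg hbase.le, inv_inv]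
  rfl

lemma coshP_base_pos (hp : 1 < p) {y : ℝ} (hy : 0 ≤ y) : (0:ℝ) < 1 + sinhP p y ^ p := by
  nlinarith [Real.rpow_nonneg (sinhP_mem hp hy) p]

lemma coshP_pos (hp : 1 < p) {y : ℝ} (hy : 0 ≤ y) : 0 < coshP p y :=
  Real.rpow_pos_of_pos (coshP_base_pos hp hy) _

lemma coshP_rpow_p (hp : 1 < p) {y : ℝ} (hy : 0 ≤ y) :
    coshP p y ^ p = 1 + sinhP p y ^ p := by
  rw [coshP, ← Real.rpow_mul (coshP_base_pos hp hy).le, one_div,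
    inv_mul_cancel₀ (by linarith : p ≠ 0), Real.rpow_one]

lemma coshP_hasDerivAt (hp : 1 < p) {y : ℝ} (hy : 0 < y) :
    HasDerivAt (coshP p) (coshP p y ^ (2 - p) * sinhP p y ^ (p - 1)) y := by
  have hs := sinhP_pos hp hy
  have hbase := coshP_base_pos hp hy.le
  have h1 : HasDerivAt (fun t => sinhP p t ^ p)
      (coshP p y * p * sinhP p y ^ (p - 1)) y :=
    (sinhP_hasDerivAt hp hy).rpow_const (Or.inr hp.le)
  have h2 : HasDerivAt (fun t => 1 + sinhP p t ^ p)
      (coshP p y * p * sinhP p y ^ (p - 1)) y := h1.const_add 1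
  have h3 : HasDerivAt (coshP p)
      ((coshP p y * p * sinhP p y ^ (p - 1)) * (1 / p) *
        (1 + sinhP p y ^ p) ^ (1 / p - 1)) y := by
    have := h2.rpow_const (p := 1 / p) (Or.inl hbase.ne')
    exact this
  convert h3 using 1
  have e1 : coshP p y ^ (2 - p) = (1 + sinhP p y ^ p) ^ ((1 / p) * (2 - p)) := by
    rw [coshP, ← Real.rpow_mul hbase.le]
  have e2 : (1 + sinhP p y ^ p) ^ (1 / p - 1) * coshP p y
      = (1 + sinhP p y ^ p) ^ ((1 / p) * (2 - p)) := by
    rw [coshP, ← Real.rpow_add hbase]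
    congr 1
    field_simp
    ring
  rw [e1]
  rw [show (coshP p y * p * sinhP p y ^ (p - 1)) * (1 / p) *
        (1 + sinhP p y ^ p) ^ (1 / p - 1)
      = ((1 + sinhP p y ^ p) ^ (1 / p - 1) * coshP p y) * sinhP p y ^ (p - 1) * (p * (1/p))
      from by ring, e2, mul_one_div_cancel (by linarith : p ≠ 0), mul_one]

lemma F_hasDerivAt (hp : 1 < p) {y : ℝ} (hy : 0 < y) :
    HasDerivAt (fun t => (1 / p) * ((p - 1) * t + coshP p t ^ (p - 1) * sinhP p t))
      (coshP p y ^ p) y := by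
  have hs := sinhP_pos hp hy
  have hc := coshP_pos hp hy.le
  have h1 : HasDerivAt (fun t => coshP p t ^ (p - 1))
      (coshP p y ^ (2 - p) * sinhP p y ^ (p - 1) * (p - 1) * coshP p y ^ (p - 1 - 1)) y :=
    (coshP_hasDerivAt hp hy).rpow_const (p := p - 1) (Or.inl hc.ne')
  have h2 : HasDerivAt (fun t => coshP p t ^ (p - 1) * sinhP p t)
      (coshP p y ^ (2 - p) * sinhP p y ^ (p - 1) * (p - 1) * coshP p y ^ (p - 1 - 1)
          * sinhP p y + coshP p y ^ (p - 1) * coshP p y) y :=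
    h1.mul (sinhP_hasDerivAt hp hy)
  have h3 : HasDerivAt (fun t : ℝ => (p - 1) * t) (p - 1) y := by
    simpa using (hasDerivAt_id y).const_mul (p - 1)
  have h4 := ((h3.add h2).const_mul (1 / p))
  refine h4.congr_deriv ?_
  symm
  have e1 : coshP p y ^ (p - 1 - 1) * coshP p y ^ (2 - p) = coshP p y ^ (0:ℝ) := by
    rw [← Real.rpow_add hc]; ring_nf
  have e2 : sinhP p y ^ (p - 1) * sinhP p y = sinhP p y ^ p := by
    nth_rewrite 2 [← Real.rpow_one (sinhP p y)]
    rw [← Real.rpow_add hs]; ring_nf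
  have e3 : coshP p y ^ (p - 1) * coshP p y = coshP p y ^ p := by
    nth_rewrite 2 [← Real.rpow_one (coshP p y)]
    rw [← Real.rpow_add hc]; ring_nf
  have e4 : sinhP p y ^ p = coshP p y ^ p - 1 := by
    rw [coshP_rpow_p hp hy.le]; ring
  have lhs_eq : coshP p y ^ (2 - p) * sinhP p y ^ (p - 1) * (p - 1) * coshP p y ^ (p - 1 - 1)
          * sinhP p y + coshP p y ^ (p - 1) * coshP p y
      = (p - 1) * (coshP p y ^ p - 1) + coshP p y ^ p := by
    calc coshP p y ^ (2 - p) * sinhP p y ^ (p - 1) * (p - 1) * coshP p y ^ (p - 1 - 1)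
          * sinhP p y + coshP p y ^ (p - 1) * coshP p y
        = (p - 1) * (coshP p y ^ (p - 1 - 1) * coshP p y ^ (2 - p))
            * (sinhP p y ^ (p - 1) * sinhP p y) + coshP p y ^ (p - 1) * coshP p y := by ring
      _ = (p - 1) * (coshP p y ^ p - 1) + coshP p y ^ p := by
            rw [e1, e2, e3, e4, Real.rpow_zero, mul_one]
  rw [lhs_eq]
  field_simp
  ring

lemma coshP_continuousOn (hp : 1 < p) : ContinuousOn (coshP p) (Ici 0) := by
  have h1 : ContinuousOn (fun y : ℝ => 1 + sinhP p y ^ p) (Ici 0) :=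
    continuousOn_const.add ((sinhP_continuousOn hp).rpow_const fun x hx => Or.inr (by linarith))
  exact h1.rpow_const fun x hx => Or.inl (coshP_base_pos hp hx).ne'

/-- `∫₀^z (cosh_p t)^p dt = (1/p)((p-1) z + (cosh_p z)^(p-1) sinh_p z)` for `z ≥ 0`. -/
theorem integral_coshP_rpow (p : ℝ) (hp : 1 < p) (z : ℝ) (hz : 0 ≤ z) :
    (∫ t in (0:ℝ)..z, coshP p t ^ p) =
      (1 / p) * ((p - 1) * z + coshP p z ^ (p - 1) * sinhP p z) := by
  rcases eq_or_lt_of_le hz with h | h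
  · subst h
    simp [sinhP_zero hp]
  · set F : ℝ → ℝ := fun t => (1 / p) * ((p - 1) * t + coshP p t ^ (p - 1) * sinhP p t) with hF
    have hc1 : ContinuousOn (fun t => coshP p t ^ (p - 1)) (Ici 0) :=
      (coshP_continuousOn hp).rpow_const fun x hx => Or.inl (coshP_pos hp hx).ne'
    have hFcont : ContinuousOn F (Icc 0 z) := by
      have : ContinuousOn F (Ici 0) := continuousOn_const.mul
        (((continuousOn_const.mul continuousOn_id).add (hc1.mul (sinhP_continuousOn hp))))
      exact this.mono Icc_subset_Ici_self
    have hint : IntervalIntegrable (fun t => coshP p t ^ p) MeasureTheory.volume 0 z := by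
      apply ContinuousOn.intervalIntegrable
      have hsub : uIcc (0:ℝ) z ⊆ Ici 0 := by
        rw [uIcc_of_le hz]; exact Icc_subset_Ici_self
      exact (((coshP_continuousOn hp).rpow_const
        (fun x hx => Or.inl (coshP_pos hp hx).ne' : ∀ x ∈ Ici (0:ℝ), coshP p x ≠ 0 ∨ 0 ≤ p)).mono hsub)
    have hderiv : ∀ x ∈ Ioo 0 z, HasDerivWithinAt F (coshP p x ^ p) (Ioi x) x :=
      fun x hx => (F_hasDerivAt hp hx.1).hasDerivWithinAt
    have := intervalIntegral.integral_eq_sub_of_hasDeriv_right_of_le hz hFcont hderiv hint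
    rw [this, hF]
    simp [sinhP_zero hp]
end

section
/- Let 1 < p < ∞. For every z ≥ 0, ∫₀^z (sinh_p(t))^p dt = (1/p)·(−z + (cosh_p(z))^{p−1}·sinh_p(z)). -/
open Real Set Filter intervalIntegral

/-- Even extension of the integrand. -/
noncomputable def gP (p t : ℝ) : ℝ := (1 + |t| ^ p) ^ (-(1 / p))

lemma one_add_abs_rpow_pos (p t : ℝ) : 0 < 1 + |t| ^ p := by positivity

lemma gP_pos (p t : ℝ) : 0 < gP p t := Real.rpow_pos_of_pos (one_add_abs_rpow_pos p t) _

lemma gP_cont {p : ℝ} (hp : 0 < p) : Continuous (gP p) := by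
  have h1 : Continuous fun t : ℝ => 1 + |t| ^ p :=
    continuous_const.add (continuous_abs.rpow_const fun x => Or.inr hp.le)
  exact h1.rpow_const fun x => Or.inl (one_add_abs_rpow_pos p x).ne'

noncomputable def BP (p x : ℝ) : ℝ := ∫ t in (0:ℝ)..x, gP p t

lemma BP_hasDerivAt {p : ℝ} (hp : 0 < p) (x : ℝ) : HasDerivAt (BP p) (gP p x) x :=
  ((gP_cont hp).integral_hasStrictDerivAt 0 x).hasDerivAt

lemma BP_strictMono {p : ℝ} (hp : 0 < p) : StrictMono (BP p) :=
  strictMono_of_deriv_pos fun x => by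
    rw [(BP_hasDerivAt hp x).deriv]; exact gP_pos p x

lemma BP_zero (p : ℝ) : BP p 0 = 0 := intervalIntegral.integral_same

lemma BP_neg {p : ℝ} (hp : 0 < p) (x : ℝ) : BP p (-x) = -BP p x := by
  have h1 : (∫ t in (0:ℝ)..x, gP p (-t)) = ∫ t in (-x)..(0:ℝ), gP p t := by
    simpa using intervalIntegral.integral_comp_neg (a := (0:ℝ)) (b := x) (f := gP p)
  have h2 : ∀ t : ℝ, gP p (-t) = gP p t := fun t => by simp [gP, abs_neg]
  simp only [h2] at h1
  rw [BP, intervalIntegral.integral_symm]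
  rw [BP, ← h1]

lemma BP_ge_log {p : ℝ} (hp : 1 < p) {x : ℝ} (hx : 1 ≤ x) :
    (2 : ℝ) ^ (-(1 / p)) * Real.log x ≤ BP p x := by
  have hp0 : 0 < p := lt_trans one_pos hp
  have hcont := gP_cont hp0
  have hsplit : BP p x = (∫ t in (0:ℝ)..1, gP p t) + ∫ t in (1:ℝ)..x, gP p t :=
    (intervalIntegral.integral_add_adjacent_intervals
      (hcont.intervalIntegrable 0 1) (hcont.intervalIntegrable 1 x)).symm
  have h1 : (0:ℝ) ≤ ∫ t in (0:ℝ)..1, gP p t :=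
    intervalIntegral.integral_nonneg zero_le_one fun t _ => (gP_pos p t).le
  have h2 : (∫ t in (1:ℝ)..x, (2 : ℝ) ^ (-(1 / p)) * t⁻¹) ≤ ∫ t in (1:ℝ)..x, gP p t := by
    apply intervalIntegral.integral_mono_on hx
    · have hco : ContinuousOn (fun t : ℝ => (2 : ℝ) ^ (-(1 / p)) * t⁻¹) (Icc 1 x) := by
        apply continuousOn_const.mul
        apply continuousOn_inv₀.mono
        intro t ht hzero
        rw [mem_singleton_iff] at hzero
        rw [hzero] at ht
        exact absurd ht.1 (by norm_num)
      exact hco.intervalIntegrable_of_Icc hx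
    · exact hcont.intervalIntegrable 1 x
    · intro t ht
      have ht1 : (1:ℝ) ≤ t := ht.1
      have ht0 : (0:ℝ) < t := lt_of_lt_of_le one_pos ht1
      have habs : |t| = t := abs_of_pos ht0
      have hle : 1 + t ^ p ≤ 2 * t ^ p := by
        have : (1:ℝ) ≤ t ^ p := Real.one_le_rpow ht1 hp0.le
        nlinarith
      have key : (2 * t ^ p) ^ (-(1 / p)) ≤ gP p t := by
        rw [gP, habs]
        exact Real.rpow_le_rpow_of_nonpos (by positivity) hle (neg_nonpos.mpr (by positivity))
      have heq : (2 * t ^ p) ^ (-(1 / p)) = (2 : ℝ) ^ (-(1 / p)) * t⁻¹ := by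
        rw [Real.mul_rpow (by norm_num) (Real.rpow_nonneg ht0.le p),
          ← Real.rpow_mul ht0.le, show p * -(1 / p) = -1 by field_simp, Real.rpow_neg_one]
      calc (2 : ℝ) ^ (-(1 / p)) * t⁻¹ = (2 * t ^ p) ^ (-(1 / p)) := heq.symm
        _ ≤ gP p t := key
  have h3 : (∫ t in (1:ℝ)..x, (2 : ℝ) ^ (-(1 / p)) * t⁻¹) = (2 : ℝ) ^ (-(1 / p)) * Real.log x := by
    rw [intervalIntegral.integral_const_mul, integral_inv_of_pos one_pos (lt_of_lt_of_le one_pos hx),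
      div_one]
  linarith [h2, h1, hsplit.ge, h3.symm.le]

lemma BP_tendsto_atTop {p : ℝ} (hp : 1 < p) : Tendsto (BP p) atTop atTop := by
  have hc : (0:ℝ) < (2 : ℝ) ^ (-(1 / p)) := Real.rpow_pos_of_pos two_pos _
  refine tendsto_atTop_mono' atTop ?_ ((Real.tendsto_log_atTop).const_mul_atTop hc)
  filter_upwards [eventually_ge_atTop (1:ℝ)] with x hx
  exact BP_ge_log hp hx

lemma BP_surjective {p : ℝ} (hp : 1 < p) : Function.Surjective (BP p) := by
  have hp0 : 0 < p := lt_trans one_pos hp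
  have hcont : Continuous (BP p) := by
    rw [continuous_iff_continuousAt]
    exact fun x => (BP_hasDerivAt hp0 x).continuousAt
  have htop := BP_tendsto_atTop hp
  have hbot : Tendsto (BP p) atBot atBot := by
    have h1 : Tendsto (fun x => BP p (-x)) atBot atTop := htop.comp tendsto_neg_atBot_atTop
    have h2 : Tendsto (fun x => -BP p (-x)) atBot atBot := tendsto_neg_atTop_atBot.comp h1
    refine h2.congr fun x => ?_
    rw [BP_neg hp0, neg_neg]
  exact hcont.surjective htop hbot

lemma arcsinhP_eq_BP {p x : ℝ} (hx : 0 ≤ x) : arcsinhP p x = BP p x := by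
  refine intervalIntegral.integral_congr fun t ht => ?_
  rw [uIcc_of_le hx] at ht
  rw [gP, abs_of_nonneg ht.1]

/-- `∫₀^z (sinh_p t)^p dt = (1/p)(-z + (cosh_p z)^(p-1) sinh_p z)` for `z ≥ 0`. -/
theorem integral_sinhP_rpow (p : ℝ) (hp : 1 < p) (z : ℝ) (hz : 0 ≤ z) :
    (∫ t in (0:ℝ)..z, sinhP p t ^ p) =
      (1 / p) * (-z + coshP p z ^ (p - 1) * sinhP p z) := by
  have hp0 : 0 < p := lt_trans one_pos hp
  have hpne : p ≠ 0 := hp0.ne'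
  set e : ℝ ≃o ℝ := StrictMono.orderIsoOfSurjective (BP p) (BP_strictMono hp0) (BP_surjective hp)
    with he
  set h : ℝ → ℝ := fun x => e.symm x with hh
  have hBh : ∀ x, BP p (h x) = x := fun x =>
    StrictMono.orderIsoOfSurjective_self_symm_apply _ _ _ x
  have hhB : ∀ x, h (BP p x) = x := fun x =>
    StrictMono.orderIsoOfSurjective_symm_apply_self _ _ _ x
  have hcont : Continuous h := OrderIso.continuous e.symm
  have hmono : StrictMono h := e.symm.strictMono
  have h0 : h 0 = 0 := by have := hhB 0; rwa [BP_zero] at this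
  have hnn : ∀ x, 0 ≤ x → 0 ≤ h x := fun x hx => h0 ▸ hmono.monotone hx
  -- derivative of h
  have hder : ∀ x, 0 ≤ x → HasDerivAt h ((1 + h x ^ p) ^ (1 / p)) x := by
    intro x hx
    have hB := BP_hasDerivAt hp0 (h x)
    have H := HasDerivAt.of_local_left_inverse hcont.continuousAt hB (gP_pos p (h x)).ne'
      (Eventually.of_forall hBh)
    refine H.congr_deriv ?_
    have hb : (0:ℝ) ≤ 1 + h x ^ p := by
      have := Real.rpow_nonneg (hnn x hx) p; linarith
    rw [gP, abs_of_nonneg (hnn x hx), Real.rpow_neg hb, inv_inv]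
  -- identify sinhP with h
  have hsinh : ∀ x, 0 ≤ x → sinhP p x = h x := by
    intro x hx
    have hmem : h x ∈ Ici (0:ℝ) := hnn x hx
    have hex : ∃ a ∈ Ici (0:ℝ), arcsinhP p a = x :=
      ⟨h x, hmem, by rw [arcsinhP_eq_BP hmem, hBh]⟩
    have h1 : arcsinhP p (Function.invFunOn (arcsinhP p) (Ici 0) x) = x :=
      Function.invFunOn_eq hex
    have h2 : Function.invFunOn (arcsinhP p) (Ici 0) x ∈ Ici (0:ℝ) :=
      Function.invFunOn_mem hex
    have hinj : ∀ a ∈ Ici (0:ℝ), ∀ b ∈ Ici (0:ℝ), arcsinhP p a = arcsinhP p b → a = b := by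
      intro a ha b hb hab
      exact (BP_strictMono hp0).injective (by rw [← arcsinhP_eq_BP ha, ← arcsinhP_eq_BP hb, hab])
    exact hinj _ h2 _ hmem (by rw [h1, arcsinhP_eq_BP hmem, hBh])
  -- rewrite integrand
  have hint_eq : (∫ t in (0:ℝ)..z, sinhP p t ^ p) = ∫ t in (0:ℝ)..z, h t ^ p := by
    refine intervalIntegral.integral_congr fun t ht => ?_
    rw [uIcc_of_le hz] at ht
    rw [hsinh t ht.1]
  -- FTC
  set F : ℝ → ℝ := fun x => (1 / p) * (-x + (1 + h x ^ p) ^ ((p - 1) / p) * h x) with hF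
  have hderivF : ∀ t ∈ uIcc (0:ℝ) z, HasDerivAt F (h t ^ p) t := by
    intro t ht
    rw [uIcc_of_le hz] at ht
    have hs : 0 ≤ h t := hnn t ht.1
    have hu : (0:ℝ) < 1 + h t ^ p := by
      have := Real.rpow_nonneg hs p; linarith
    have h1 : HasDerivAt h ((1 + h t ^ p) ^ (1 / p)) t := hder t ht.1
    have h2 : HasDerivAt (fun x => h x ^ p)
        (p * h t ^ (p - 1) * ((1 + h t ^ p) ^ (1 / p))) t := by
      have := (Real.hasDerivAt_rpow_const (x := h t) (p := p) (Or.inr hp.le)).comp t h1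
      exact this
    have h3 : HasDerivAt (fun x => 1 + h x ^ p)
        (p * h t ^ (p - 1) * ((1 + h t ^ p) ^ (1 / p))) t := h2.const_add 1
    have h4 : HasDerivAt (fun x => (1 + h x ^ p) ^ ((p - 1) / p))
        ((p - 1) / p * (1 + h t ^ p) ^ ((p - 1) / p - 1) *
          (p * h t ^ (p - 1) * ((1 + h t ^ p) ^ (1 / p)))) t := by
      have := (Real.hasDerivAt_rpow_const (x := 1 + h t ^ p) (p := (p - 1) / p)
        (Or.inl hu.ne')).comp t h3
      exact this
    have h5 := h4.mul h1
    have h6 := ((hasDerivAt_id t).neg.add h5).const_mul (1 / p)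
    refine h6.congr_deriv ?_
    -- algebraic simplification
    have key1 : (1 + h t ^ p) ^ ((p - 1) / p - 1) * (1 + h t ^ p) ^ (1 / p) = 1 := by
      rw [← Real.rpow_add hu, show (p - 1) / p - 1 + 1 / p = 0 by field_simp; ring, Real.rpow_zero]
    have key2 : (1 + h t ^ p) ^ ((p - 1) / p) * (1 + h t ^ p) ^ (1 / p) = 1 + h t ^ p := by
      rw [← Real.rpow_add hu, show (p - 1) / p + 1 / p = 1 by field_simp; ring, Real.rpow_one]
    have key3 : h t ^ (p - 1) * h t = h t ^ p := by
      rcases hs.eq_or_lt with h' | h'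
      · rw [← h', Real.zero_rpow hpne, Real.zero_rpow (by intro h''; nlinarith : p - 1 ≠ 0),
          zero_mul]
      · rw [← Real.rpow_add_one h'.ne' (p - 1), sub_add_cancel]
    have expand : (p - 1) / p * (1 + h t ^ p) ^ ((p - 1) / p - 1) *
          (p * h t ^ (p - 1) * ((1 + h t ^ p) ^ (1 / p))) * h t +
        (1 + h t ^ p) ^ ((p - 1) / p) * ((1 + h t ^ p) ^ (1 / p)) =
        (p - 1) * (h t ^ p) + (1 + h t ^ p) := by
      calc (p - 1) / p * (1 + h t ^ p) ^ ((p - 1) / p - 1) *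
              (p * h t ^ (p - 1) * ((1 + h t ^ p) ^ (1 / p))) * h t +
            (1 + h t ^ p) ^ ((p - 1) / p) * ((1 + h t ^ p) ^ (1 / p))
          = ((p - 1) / p * p) * (h t ^ (p - 1) * h t) *
              ((1 + h t ^ p) ^ ((p - 1) / p - 1) * (1 + h t ^ p) ^ (1 / p)) +
            (1 + h t ^ p) ^ ((p - 1) / p) * ((1 + h t ^ p) ^ (1 / p)) := by ring
        _ = (p - 1) * (h t ^ p) + (1 + h t ^ p) := by
            rw [key1, key2, key3, div_mul_cancel₀ _ hpne, mul_one]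
    rw [expand]
    field_simp
    ring
  have hint : IntervalIntegrable (fun t => h t ^ p) MeasureTheory.volume 0 z :=
    (hcont.rpow_const fun x => Or.inr hp0.le).intervalIntegrable 0 z
  have hFTC := intervalIntegral.integral_eq_sub_of_hasDerivAt hderivF hint
  rw [hint_eq, hFTC]
  have hF0 : F 0 = 0 := by
    rw [hF]
    simp [h0, Real.zero_rpow hpne]
  rw [hF0, sub_zero, hF]
  have hbz : (0:ℝ) ≤ 1 + h z ^ p := by
    have := Real.rpow_nonneg (hnn z hz) p; linarith
  have hcosh : coshP p z ^ (p - 1) = (1 + h z ^ p) ^ ((p - 1) / p) := by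
    rw [coshP, hsinh z hz, ← Real.rpow_mul hbz, show 1 / p * (p - 1) = (p - 1) / p by ring]
  rw [hcosh, hsinh z hz]
end
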